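/- arXiv:1911.06642 — 4 statements merged into one kernel-verified Lean document; each statement's English description precedes it below -/
import Mathlib

section
/- For every integer k ≥ 5 there exist a constant c > 0 and an integer n₀ such that for all n ≥ n₀ there is a simple graph G on n vertices together with a proper edge-coloring of G containing no rainbow copy of the path P_k, such that G contains at least c·n^⌊k/2⌋ copies of P_k. (Lower bound of Theorem 1.1: ex(n, P_k, rainbow-P_k) = Ω(n^⌊k/2⌋).) -/
open SimpleGraph

/-- A proper edge-coloring: distinct edges of `G` sharing a vertex get different colors. -/
def IsProperEdgeColoring {V β : Type*} (G : SimpleGraph V) (c : Sym2 V → β) : Prop :=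
  ∀ e₁ ∈ G.edgeSet, ∀ e₂ ∈ G.edgeSet, e₁ ≠ e₂ → (∃ v, v ∈ e₁ ∧ v ∈ e₂) → c e₁ ≠ c e₂

/-- `G`, with edge-coloring `c`, contains a rainbow copy of `H`:
a subgraph isomorphic to `H` all of whose edges get pairwise distinct colors. -/
def HasRainbowCopy {V W β : Type*} (G : SimpleGraph V) (c : Sym2 V → β)
    (H : SimpleGraph W) : Prop :=
  ∃ A : G.Subgraph, Nonempty (A.coe ≃g H) ∧ Set.InjOn c A.edgeSet

/-- The number of copies of `H` in `G`, i.e. the number of subgraphs of `G`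
isomorphic to `H`. -/
noncomputable def copyCount {V W : Type*} (G : SimpleGraph V) (H : SimpleGraph W) : ℕ :=
  Set.ncard {A : G.Subgraph | Nonempty (A.coe ≃g H)}

namespace RainbowPath




/-- hub classes: 1 and even classes 4..k-2 (with special case k=5 where 4 is a hub). -/
def hub (k j : ℕ) : Prop := j = 1 ∨ (j % 2 = 0 ∧ 4 ≤ j ∧ j ≤ (if k = 5 then 4 else k - 2))

instance (k j : ℕ) : Decidable (hub k j) := by unfold hub; infer_instance

def lab (j : ℕ) : ℕ := if j = 3 then 2 else j + 1

/-- oriented step relation of the core graph -/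
def step (k m : ℕ) (p q : ℕ × ℕ) : Prop :=
  q.1 = p.1 + 1 ∧ q.1 < k ∧ p.2 < m ∧ q.2 < m ∧
    (hub k p.1 → p.2 = 0) ∧ (hub k q.1 → q.2 = 0) ∧
    (¬ hub k p.1 → ¬ hub k q.1 → p.2 = q.2)

def Gcore (k m : ℕ) : SimpleGraph (ℕ × ℕ) where
  Adj p q := step k m p q ∨ step k m q p
  symm := by constructor; intro p q h; tauto
  loopless := by constructor; intro p h; rcases h with h | h <;> exact absurd h.1 (by omega)

lemma gcore_adj {k m : ℕ} {p q : ℕ × ℕ} :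
    (Gcore k m).Adj p q ↔ step k m p q ∨ step k m q p := Iff.rfl

def ec (k m : ℕ) (p q : ℕ × ℕ) : ℕ :=
  if ¬ hub k p.1 ∧ ¬ hub k q.1 then 0
  else lab p.1 * m + (if hub k p.1 then q.2 else p.2) + 1

def cf (k m : ℕ) (p q : ℕ × ℕ) : ℕ :=
  if q.1 = p.1 + 1 then ec k m p q else if p.1 = q.1 + 1 then ec k m q p else 0

lemma cf_symm (k m : ℕ) (p q : ℕ × ℕ) : cf k m p q = cf k m q p := by
  unfold cf
  by_cases h1 : q.1 = p.1 + 1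
  · rw [if_pos h1, if_neg (show ¬ p.1 = q.1 + 1 by omega), if_pos h1]
  · by_cases h2 : p.1 = q.1 + 1
    · rw [if_neg h1, if_pos h2, if_pos h2]
    · rw [if_neg h1, if_neg h2, if_neg h2, if_neg h1]

def colcore (k m : ℕ) : Sym2 (ℕ × ℕ) → ℕ := Sym2.lift ⟨fun p q => cf k m p q, cf_symm k m⟩

lemma colcore_mk {k m : ℕ} (p q : ℕ × ℕ) : colcore k m s(p, q) = cf k m p q := rfl

lemma colcore_step {k m : ℕ} {p q : ℕ × ℕ} (h : q.1 = p.1 + 1) :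
    colcore k m s(p, q) = ec k m p q := by
  rw [colcore_mk]; unfold cf; simp [h]

-- basic hub facts
lemma hub_one (k : ℕ) : hub k 1 := Or.inl rfl

lemma hub_four {k : ℕ} (hk : 5 ≤ k) : hub k 4 := by
  unfold hub; by_cases h5 : k = 5
  · rw [if_pos h5]; omega
  · rw [if_neg h5]; omega

lemma not_hub_zero (k : ℕ) : ¬ hub k 0 := by unfold hub; omega

lemma not_hub_two (k : ℕ) : ¬ hub k 2 := by
  unfold hub; by_cases h5 : k = 5
  · rw [if_pos h5]; omega
  · rw [if_neg h5]; omega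

lemma not_hub_three (k : ℕ) : ¬ hub k 3 := by unfold hub; omega

lemma hub_not_succ {k j : ℕ} (hk : 5 ≤ k) (h : hub k j) : ¬ hub k (j + 1) := by
  unfold hub at h ⊢; by_cases h5 : k = 5
  · rw [if_pos h5] at h ⊢; omega
  · rw [if_neg h5] at h ⊢; omega

/-- positions of matching (γ) edges -/
lemma mm_pos {k j : ℕ} (hk : 5 ≤ k) (hjk : j + 1 < k)
    (h1 : ¬ hub k j) (h2 : ¬ hub k (j + 1)) :
    j = 2 ∨ (k % 2 = 1 ∧ 7 ≤ k ∧ j = k - 2) := by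
  unfold hub at h1 h2; by_cases h5 : k = 5
  · rw [if_pos h5] at h1 h2; omega
  · rw [if_neg h5] at h1 h2; omega


lemma lab_eq {i j : ℕ} (h : lab i = lab j) : i = j ∨ (i = 1 ∧ j = 3) ∨ (i = 3 ∧ j = 1) := by
  unfold lab at h; split_ifs at h <;> omega

lemma mul_add_inj {L1 L2 a b m : ℕ} (ha : a < m) (hb : b < m)
    (h : L1 * m + a = L2 * m + b) : L1 = L2 ∧ a = b := by
  have h1 : (a + L1 * m) % m = a := by
    rw [Nat.add_mul_mod_self_right]; exact Nat.mod_eq_of_lt ha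
  have h2 : (b + L2 * m) % m = b := by
    rw [Nat.add_mul_mod_self_right]; exact Nat.mod_eq_of_lt hb
  have hab : a = b := by
    rw [← h1, ← h2]; congr 1; omega
  refine ⟨?_, hab⟩
  have hm : 0 < m := by omega
  exact Nat.eq_of_mul_eq_mul_right hm (by omega)

lemma core_proper {k m : ℕ} (hk : 5 ≤ k) {x₁ y₁ x₂ y₂ : ℕ × ℕ}
    (h₁ : step k m x₁ y₁) (h₂ : step k m x₂ y₂)
    (hne : s(x₁, y₁) ≠ s(x₂, y₂))
    (hsh : x₁ = x₂ ∨ x₁ = y₂ ∨ y₁ = x₂ ∨ y₁ = y₂) :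
    ec k m x₁ y₁ ≠ ec k m x₂ y₂ := by
  obtain ⟨e1, l1, cx1, cy1, hx1, hy1, mm1⟩ := h₁
  obtain ⟨e2, l2, cx2, cy2, hx2, hy2, mm2⟩ := h₂
  intro hcol
  unfold ec at hcol
  by_cases m1 : ¬ hub k x₁.1 ∧ ¬ hub k y₁.1 <;> by_cases m2 : ¬ hub k x₂.1 ∧ ¬ hub k y₂.1
  · -- both γ edges
    have hc1 : x₁.2 = y₁.2 := mm1 m1.1 m1.2
    have hc2 : x₂.2 = y₂.2 := mm2 m2.1 m2.2
    have p1 : x₁.1 = 2 ∨ (k % 2 = 1 ∧ 7 ≤ k ∧ x₁.1 = k - 2) := by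
      refine mm_pos hk (by omega) m1.1 ?_
      rw [show x₁.1 + 1 = y₁.1 by omega]; exact m1.2
    have p2 : x₂.1 = 2 ∨ (k % 2 = 1 ∧ 7 ≤ k ∧ x₂.1 = k - 2) := by
      refine mm_pos hk (by omega) m2.1 ?_
      rw [show x₂.1 + 1 = y₂.1 by omega]; exact m2.2
    have hcc : x₁.1 = x₂.1 := by
      rcases hsh with h | h | h | h
      · rw [h]
      · exfalso
        have hx : x₁.1 = y₂.1 := by rw [h]
        rcases p1 with q1 | q1 <;> rcases p2 with q2 | q2 <;> omega
      · exfalso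
        have hx : y₁.1 = x₂.1 := by rw [h]
        rcases p1 with q1 | q1 <;> rcases p2 with q2 | q2 <;> omega
      · have hx : y₁.1 = y₂.1 := by rw [h]
        omega
    have hcc2 : x₁.2 = x₂.2 := by
      rcases hsh with h | h | h | h
      · rw [h]
      · exfalso
        have hx : x₁.1 = y₂.1 := by rw [h]
        rcases p1 with q1 | q1 <;> rcases p2 with q2 | q2 <;> omega
      · exfalso
        have hx : y₁.1 = x₂.1 := by rw [h]
        rcases p1 with q1 | q1 <;> rcases p2 with q2 | q2 <;> omega
      · have hx : y₁.2 = y₂.2 := by rw [h]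
        omega
    have hx : x₁ = x₂ := Prod.ext_iff.mpr ⟨hcc, hcc2⟩
    have hy : y₁ = y₂ := Prod.ext_iff.mpr ⟨by omega, by omega⟩
    exact hne (by rw [hx, hy])
  · -- γ vs colored
    rw [if_pos m1, if_neg m2] at hcol; omega
  · rw [if_neg m1, if_pos m2] at hcol; omega
  · -- both colored
    rw [if_neg m1, if_neg m2] at hcol
    have hclt1 : (if hub k x₁.1 then y₁.2 else x₁.2) < m := by split <;> assumption
    have hclt2 : (if hub k x₂.1 then y₂.2 else x₂.2) < m := by split <;> assumption
    have hmain := mul_add_inj (L1 := lab x₁.1) (L2 := lab x₂.1) hclt1 hclt2 (by omega)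
    rcases lab_eq hmain.1 with hxx | hxx | hxx
    · -- same class
      have hyy : y₁.1 = y₂.1 := by omega
      rcases hsh with h | h | h | h
      · -- x₁ = x₂ : show y₁ = y₂
        refine hne ?_
        have hy : y₁ = y₂ := by
          refine Prod.ext_iff.mpr ⟨hyy, ?_⟩
          by_cases hh : hub k x₁.1
          · have hh2 : hub k x₂.1 := by rw [← hxx]; exact hh
            rw [if_pos hh, if_pos hh2] at hmain
            exact hmain.2
          · have hhy1 : hub k y₁.1 := by by_contra hcon; exact m1 ⟨hh, hcon⟩
            have hhy2 : hub k y₂.1 := by rw [← hyy]; exact hhy1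
            rw [hy1 hhy1, hy2 hhy2]
        rw [h, hy]
      · exfalso
        have hx : x₁.1 = y₂.1 := by rw [h]
        omega
      · exfalso
        have hx : y₁.1 = x₂.1 := by rw [h]
        omega
      · -- y₁ = y₂ : show x₁ = x₂
        refine hne ?_
        have hx : x₁ = x₂ := by
          refine Prod.ext_iff.mpr ⟨hxx, ?_⟩
          by_cases hh : hub k x₁.1
          · have hh2 : hub k x₂.1 := by rw [← hxx]; exact hh
            rw [hx1 hh, hx2 hh2]
          · have hh2 : ¬ hub k x₂.1 := by rw [← hxx]; exact hh
            rw [if_neg hh, if_neg hh2] at hmain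
            exact hmain.2
        rw [h, hx]
      -- classes {1,3} : edges cannot share a vertex
    · exfalso
      rcases hsh with h | h | h | h
      · have hq : x₁.1 = x₂.1 := by rw [h]
        omega
      · have hq : x₁.1 = y₂.1 := by rw [h]
        omega
      · have hq : y₁.1 = x₂.1 := by rw [h]
        omega
      · have hq : y₁.1 = y₂.1 := by rw [h]
        omega
    · exfalso
      rcases hsh with h | h | h | h
      · have hq : x₁.1 = x₂.1 := by rw [h]
        omega
      · have hq : x₁.1 = y₂.1 := by rw [h]
        omega
      · have hq : y₁.1 = x₂.1 := by rw [h]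
        omega
      · have hq : y₁.1 = y₂.1 := by rw [h]
        omega


lemma hub_card {k : ℕ} (hk : 5 ≤ k) :
    ((Finset.range k).filter (hub k)).card ≤ (k - 1) / 2 := by
  have : ((Finset.range k).filter (hub k)).card ≤ (Finset.range ((k - 1) / 2)).card := by
    apply Finset.card_le_card_of_injOn (fun j => if j = 1 then 0 else j / 2 - 1)
    · intro j hj
      simp only [Finset.mem_coe, Finset.mem_filter, Finset.mem_range] at hj ⊢
      obtain ⟨hjk, hhub⟩ := hj
      unfold hub at hhub
      by_cases h5 : k = 5
      · rw [if_pos h5] at hhub; split <;> omega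
      · rw [if_neg h5] at hhub; split <;> omega
    · intro i hi j hj hij
      simp only [Finset.mem_coe, Finset.mem_filter, Finset.mem_range] at hi hj
      obtain ⟨hik, hihub⟩ := hi
      obtain ⟨hjk, hjhub⟩ := hj
      unfold hub at hihub hjhub
      by_cases h5 : k = 5
      all_goals first
        | rw [if_pos h5] at hihub hjhub
        | rw [if_neg h5] at hihub hjhub
      all_goals {
        dsimp only at hij
        split at hij <;> split at hij <;> omega }
  simpa using this

lemma edges_ne {α : Type*} {k : ℕ} {w : ℕ → α}
    (hinj : ∀ i < k, ∀ j < k, w i = w j → i = j)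
    {p q : ℕ} (hp : p + 1 < k) (hq : q + 1 < k) (hpq : p ≠ q) :
    s(w p, w (p + 1)) ≠ s(w q, w (q + 1)) := by
  intro h
  rw [Sym2.mk_eq_mk_iff (p := (w p, w (p + 1))) (q := (w q, w (q + 1)))] at h
  rcases h with h | h
  · have h1 : w p = w q := congrArg Prod.fst h
    exact hpq (hinj p (by omega) q (by omega) h1)
  · have h1 : w p = w (q + 1) := congrArg Prod.fst h
    have h2 : w (p + 1) = w q := congrArg Prod.snd h
    have e1 := hinj p (by omega) (q + 1) (by omega) h1
    have e2 := hinj (p + 1) (by omega) q (by omega) h2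
    omega

lemma colcore_gamma {k m : ℕ} {p q : ℕ × ℕ} (hadj : (Gcore k m).Adj p q)
    (h1 : ¬ hub k p.1) (h2 : ¬ hub k q.1) : colcore k m s(p, q) = 0 := by
  rcases hadj with h | h
  · rw [colcore_step h.1]
    unfold ec; rw [if_pos ⟨h1, h2⟩]
  · rw [Sym2.eq_swap, colcore_step h.1]
    unfold ec; rw [if_pos ⟨h2, h1⟩]

lemma forced_walk {k m : ℕ} (hk : 5 ≤ k) (w : ℕ → ℕ × ℕ)
    (hinj : ∀ i < k, ∀ j < k, w i = w j → i = j)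
    (hadj : ∀ i, i + 1 < k → (Gcore k m).Adj (w i) (w (i + 1)))
    {a b : ℕ} (ha : a < k) (hb : b < k) (hab : a < b)
    (hwa : w a = (1, 0)) (hwb : w b = (4, 0)) :
    ∃ p q, p + 1 < k ∧ q + 1 < k ∧ s(w p, w (p + 1)) ≠ s(w q, w (q + 1)) ∧
      colcore k m s(w p, w (p + 1)) = colcore k m s(w q, w (q + 1)) := by
  have hpa : a + 1 < k := by omega
  -- the vertex after u₁ has class 0 or 2
  have h0 := hadj a hpa
  rw [gcore_adj] at h0
  have hcls : (w (a + 1)).1 = 2 ∨ (w (a + 1)).1 = 0 := by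
    rcases h0 with h | h
    · left; have := h.1; rw [hwa] at this; omega
    · right; have := h.1; rw [hwa] at this; omega
  rcases hcls with hcls | hcls
  · -- class 2, the leg
    set c := (w (a + 1)).2 with hc
    have hw1 : w (a + 1) = (2, c) := Prod.ext_iff.mpr ⟨hcls, rfl⟩
    have hba1 : b ≠ a + 1 := by
      intro h; rw [← h, hwb] at hw1; simp at hw1
    have h2k : a + 2 < k := by omega
    have h1 := hadj (a + 1) h2k
    rw [gcore_adj, show a + 1 + 1 = a + 2 from rfl] at h1
    have hw2 : w (a + 2) = (3, c) := by
      rcases h1 with h | h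
      · obtain ⟨e1, l1, cx1, cy1, hx1, hy1, mm1⟩ := h
        rw [hw1] at e1 mm1 cx1
        have hcl : (w (a + 2)).1 = 3 := by simpa using e1
        have hco : (w (a + 2)).2 = c := by
          have := mm1 (by simpa using not_hub_two k) (by rw [hcl]; exact not_hub_three k)
          simpa using this.symm
        exact Prod.ext_iff.mpr ⟨hcl, hco⟩
      · exfalso
        obtain ⟨e1, l1, cx1, cy1, hx1, hy1, mm1⟩ := h
        rw [hw1] at e1 hy1
        have hcl : (w (a + 2)).1 = 1 := by simpa using e1
        have hco : (w (a + 2)).2 = 0 := hx1 (by rw [hcl]; exact hub_one k)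
        have : w (a + 2) = w a := by
          rw [hwa]; exact Prod.ext_iff.mpr ⟨hcl, hco⟩
        have := hinj (a + 2) (by omega) a (by omega) this
        omega
    have hba2 : b ≠ a + 2 := by
      intro h; rw [← h, hwb] at hw2; simp at hw2
    have h3k : a + 3 < k := by omega
    have h2 := hadj (a + 2) h3k
    rw [gcore_adj, show a + 2 + 1 = a + 3 from rfl] at h2
    have hw3 : w (a + 3) = (4, 0) := by
      rcases h2 with h | h
      · obtain ⟨e1, l1, cx1, cy1, hx1, hy1, mm1⟩ := h
        rw [hw2] at e1
        have hcl : (w (a + 3)).1 = 4 := by simpa using e1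
        have hco : (w (a + 3)).2 = 0 := hy1 (by rw [hcl]; exact hub_four hk)
        exact Prod.ext_iff.mpr ⟨hcl, hco⟩
      · exfalso
        obtain ⟨e1, l1, cx1, cy1, hx1, hy1, mm1⟩ := h
        rw [hw2] at e1 mm1
        have hcl : (w (a + 3)).1 = 2 := by simpa using e1
        have hco : (w (a + 3)).2 = c := by
          have := mm1 (by rw [hcl]; exact not_hub_two k) (by simpa using not_hub_three k)
          simpa using this
        have : w (a + 3) = w (a + 1) := by
          rw [hw1]; exact Prod.ext_iff.mpr ⟨hcl, hco⟩
        have := hinj (a + 3) (by omega) (a + 1) (by omega) this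
        omega
    refine ⟨a, a + 2, hpa, h3k, edges_ne hinj hpa h3k (by omega), ?_⟩
    have c1 : colcore k m s(w a, w (a + 1)) = 2 * m + c + 1 := by
      rw [hwa, hw1, colcore_step (by simp)]
      unfold ec
      rw [if_neg (fun h => h.1 (hub_one k)), if_pos (hub_one k)]
      show lab 1 * m + c + 1 = 2 * m + c + 1
      unfold lab; norm_num
    have c2 : colcore k m s(w (a + 2), w (a + 3)) = 2 * m + c + 1 := by
      rw [hw2, hw3, colcore_step (by simp)]
      unfold ec
      rw [if_neg (fun h => h.2 (hub_four hk)), if_neg (not_hub_three k)]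
      show lab 3 * m + c + 1 = 2 * m + c + 1
      unfold lab; norm_num
    rw [c1, c2]
  · -- class 0 : dead end, contradiction
    exfalso
    have hw1 : w (a + 1) = (0, (w (a + 1)).2) := Prod.ext_iff.mpr ⟨hcls, rfl⟩
    have hba1 : b ≠ a + 1 := by
      intro h; rw [← h, hwb] at hw1; simp at hw1
    have h2k : a + 2 < k := by omega
    have h1 := hadj (a + 1) h2k
    rw [gcore_adj, show a + 1 + 1 = a + 2 from rfl] at h1
    rcases h1 with h | h
    · obtain ⟨e1, l1, cx1, cy1, hx1, hy1, mm1⟩ := h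
      rw [hcls] at e1
      have hcl : (w (a + 2)).1 = 1 := by omega
      have hco : (w (a + 2)).2 = 0 := hy1 (by rw [hcl]; exact hub_one k)
      have : w (a + 2) = w a := by
        rw [hwa]; exact Prod.ext_iff.mpr ⟨hcl, hco⟩
      have := hinj (a + 2) (by omega) a (by omega) this
      omega
    · obtain ⟨e1, l1, cx1, cy1, hx1, hy1, mm1⟩ := h
      rw [hcls] at e1
      omega


open Classical in
theorem coreNR {k m : ℕ} (hk : 5 ≤ k) (w : ℕ → ℕ × ℕ)
    (hinj : ∀ i < k, ∀ j < k, w i = w j → i = j)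
    (hadj : ∀ i, i + 1 < k → (Gcore k m).Adj (w i) (w (i + 1))) :
    ∃ p q, p + 1 < k ∧ q + 1 < k ∧ s(w p, w (p + 1)) ≠ s(w q, w (q + 1)) ∧
      colcore k m s(w p, w (p + 1)) = colcore k m s(w q, w (q + 1)) := by
  classical
  set γp : ℕ → Prop := fun p => ¬ hub k (w p).1 ∧ ¬ hub k (w (p + 1)).1 with hγp
  set A := (Finset.range (k - 1)).filter γp with hA
  by_cases hAc : 2 ≤ A.card
  · -- two γ-edges
    obtain ⟨p, hp, q, hq, hpq⟩ := Finset.one_lt_card.mp (show 1 < A.card by omega)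
    rw [hA, Finset.mem_filter, Finset.mem_range] at hp hq
    have hpk : p + 1 < k := by omega
    have hqk : q + 1 < k := by omega
    refine ⟨p, q, hpk, hqk, edges_ne hinj hpk hqk hpq, ?_⟩
    rw [colcore_gamma (hadj p hpk) hp.2.1 hp.2.2,
      colcore_gamma (hadj q hqk) hq.2.1 hq.2.2]
  · -- at most one γ edge
    set B := (Finset.range (k - 1)).filter (fun p => ¬ γp p) with hB
    have hAB : A.card + B.card = k - 1 := by
      rw [hA, hB, Finset.card_filter_add_card_filter_not, Finset.card_range]
    have hBcard : k - 2 ≤ B.card := by omega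
    set hubsIn := (Finset.range k).filter
      (fun j => hub k j ∧ ∃ i, i < k ∧ w i = (j, 0)) with hhubsIn
    -- vertex facts at an edge position
    have vfact : ∀ p, p + 1 < k → ((w p).1 < k ∧ (w (p + 1)).1 < k ∧
        (hub k (w p).1 → (w p).2 = 0) ∧ (hub k (w (p + 1)).1 → (w (p + 1)).2 = 0)) := by
      intro p hp
      have h := hadj p hp
      rw [gcore_adj] at h
      rcases h with h | h
      · obtain ⟨e1, l1, _, _, hx1, hy1, _⟩ := h
        exact ⟨by omega, by omega, hx1, hy1⟩
      · obtain ⟨e1, l1, _, _, hx1, hy1, _⟩ := h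
        exact ⟨by omega, by omega, hy1, hx1⟩
    have hBle : B.card ≤ hubsIn.card * 2 := by
      have hinj2 : ∀ p ∈ B, ∀ q ∈ B,
          (fun p => (if hub k (w p).1 then (w p).1 else (w (p + 1)).1,
            decide (hub k (w p).1))) p =
          (fun p => (if hub k (w p).1 then (w p).1 else (w (p + 1)).1,
            decide (hub k (w p).1))) q → p = q := by
        intro p hp q hq hpq
        simp only [hB, Finset.mem_filter, Finset.mem_range] at hp hq
        obtain ⟨hpk, hpγ⟩ := hp
        obtain ⟨hqk, hqγ⟩ := hq
        have hpk' : p + 1 < k := by omega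
        have hqk' : q + 1 < k := by omega
        obtain ⟨_, _, c0p, c1p⟩ := vfact p hpk'
        obtain ⟨_, _, c0q, c1q⟩ := vfact q hqk'
        simp only [Prod.mk.injEq, decide_eq_decide] at hpq
        by_cases hh : hub k (w p).1
        · have hh2 : hub k (w q).1 := hpq.2.mp hh
          rw [if_pos hh, if_pos hh2] at hpq
          have : w p = w q := by
            have e1 : w p = ((w p).1, 0) := Prod.ext_iff.mpr ⟨rfl, c0p hh⟩
            have e2 : w q = ((w q).1, 0) := Prod.ext_iff.mpr ⟨rfl, c0q hh2⟩
            rw [e1, e2, hpq.1]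
          exact hinj p (by omega) q (by omega) this
        · have hh2 : ¬ hub k (w q).1 := fun h => hh (hpq.2.mpr h)
          rw [if_neg hh, if_neg hh2] at hpq
          have hpγ' : ¬ (¬ hub k (w p).1 ∧ ¬ hub k (w (p + 1)).1) := hpγ
          have hqγ' : ¬ (¬ hub k (w q).1 ∧ ¬ hub k (w (q + 1)).1) := hqγ
          have hhp1 : hub k (w (p + 1)).1 := by
            by_contra hcon; exact hpγ' ⟨hh, hcon⟩
          have hhq1 : hub k (w (q + 1)).1 := by
            by_contra hcon; exact hqγ' ⟨hh2, hcon⟩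
          have : w (p + 1) = w (q + 1) := by
            have e1 : w (p + 1) = ((w (p + 1)).1, 0) := Prod.ext_iff.mpr ⟨rfl, c1p hhp1⟩
            have e2 : w (q + 1) = ((w (q + 1)).1, 0) := Prod.ext_iff.mpr ⟨rfl, c1q hhq1⟩
            rw [e1, e2, hpq.1]
          have := hinj (p + 1) (by omega) (q + 1) (by omega) this
          omega
      have hmaps : ∀ p ∈ B, (if hub k (w p).1 then (w p).1 else (w (p + 1)).1,
          decide (hub k (w p).1)) ∈ hubsIn ×ˢ (Finset.univ : Finset Bool) := by
        intro p hp
        simp only [hB, Finset.mem_filter, Finset.mem_range] at hp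
        obtain ⟨hpk, hpγ⟩ := hp
        have hpk' : p + 1 < k := by omega
        obtain ⟨d1, d2, c0, c1⟩ := vfact p hpk'
        rw [Finset.mem_product]
        refine ⟨?_, Finset.mem_univ _⟩
        simp only [hhubsIn, Finset.mem_filter, Finset.mem_range]
        by_cases hh : hub k (w p).1
        · rw [if_pos hh]
          exact ⟨d1, hh, p, by omega, Prod.ext_iff.mpr ⟨rfl, c0 hh⟩⟩
        · rw [if_neg hh]
          have hpγ' : ¬ (¬ hub k (w p).1 ∧ ¬ hub k (w (p + 1)).1) := hpγ
          have hhp1 : hub k (w (p + 1)).1 := by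
            by_contra hcon; exact hpγ' ⟨hh, hcon⟩
          exact ⟨d2, hhp1, p + 1, by omega, Prod.ext_iff.mpr ⟨rfl, c1 hhp1⟩⟩
      have := Finset.card_le_card_of_injOn _ hmaps hinj2
      simpa [Finset.card_product] using this
    -- u1 and u2 are on the path
    have hu1 : ∃ a, a < k ∧ w a = (1, 0) := by
      by_contra hno
      push_neg at hno
      have hsub : hubsIn ⊆ ((Finset.range k).filter (hub k)).erase 1 := by
        intro j hj
        simp only [hhubsIn, Finset.mem_filter, Finset.mem_range] at hj
        rw [Finset.mem_erase]
        refine ⟨?_, Finset.mem_filter.mpr ⟨Finset.mem_range.mpr hj.1, hj.2.1⟩⟩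
        rintro rfl
        obtain ⟨i, hik, hwi⟩ := hj.2.2
        exact hno i hik hwi
      have h1mem : (1 : ℕ) ∈ (Finset.range k).filter (hub k) :=
        Finset.mem_filter.mpr ⟨Finset.mem_range.mpr (by omega), hub_one k⟩
      have := Finset.card_le_card hsub
      rw [Finset.card_erase_of_mem h1mem] at this
      have hhc := hub_card hk
      omega
    have hu2 : ∃ b, b < k ∧ w b = (4, 0) := by
      by_contra hno
      push_neg at hno
      have hsub : hubsIn ⊆ ((Finset.range k).filter (hub k)).erase 4 := by
        intro j hj
        simp only [hhubsIn, Finset.mem_filter, Finset.mem_range] at hj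
        rw [Finset.mem_erase]
        refine ⟨?_, Finset.mem_filter.mpr ⟨Finset.mem_range.mpr hj.1, hj.2.1⟩⟩
        rintro rfl
        obtain ⟨i, hik, hwi⟩ := hj.2.2
        exact hno i hik hwi
      have h4mem : (4 : ℕ) ∈ (Finset.range k).filter (hub k) :=
        Finset.mem_filter.mpr ⟨Finset.mem_range.mpr (by omega), hub_four hk⟩
      have := Finset.card_le_card hsub
      rw [Finset.card_erase_of_mem h4mem] at this
      have hhc := hub_card hk
      omega
    obtain ⟨a, ha, hwa⟩ := hu1
    obtain ⟨b, hb, hwb⟩ := hu2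
    have hne : a ≠ b := by
      intro h
      rw [h, hwb] at hwa
      simp at hwa
    rcases Nat.lt_or_ge a b with hab | hab
    · exact forced_walk hk w hinj hadj ha hb hab hwa hwb
    · have hba : b < a := by omega
      set w' : ℕ → ℕ × ℕ := fun i => w (k - 1 - i) with hw'
      have hinj' : ∀ i < k, ∀ j < k, w' i = w' j → i = j := by
        intro i hi j hj h
        have := hinj (k - 1 - i) (by omega) (k - 1 - j) (by omega) h
        omega
      have hadj' : ∀ i, i + 1 < k → (Gcore k m).Adj (w' i) (w' (i + 1)) := by
        intro i hi
        show (Gcore k m).Adj (w (k - 1 - i)) (w (k - 1 - (i + 1)))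
        rw [show k - 1 - i = (k - 2 - i) + 1 by omega,
          show k - 1 - (i + 1) = k - 2 - i by omega]
        exact (Gcore k m).adj_symm (hadj (k - 2 - i) (by omega))
      have hwa' : w' (k - 1 - a) = (1, 0) := by
        show w (k - 1 - (k - 1 - a)) = (1, 0)
        rw [show k - 1 - (k - 1 - a) = a by omega]; exact hwa
      have hwb' : w' (k - 1 - b) = (4, 0) := by
        show w (k - 1 - (k - 1 - b)) = (4, 0)
        rw [show k - 1 - (k - 1 - b) = b by omega]; exact hwb
      obtain ⟨p, q, hp, hq, hneq, hcol⟩ := forced_walk hk w' hinj' hadj'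
        (show k - 1 - a < k by omega) (show k - 1 - b < k by omega)
        (by omega) hwa' hwb'
      have hh : ∀ r, r + 1 < k → s(w' r, w' (r + 1)) = s(w (k - 2 - r), w ((k - 2 - r) + 1)) := by
        intro r hr
        show s(w (k - 1 - r), w (k - 1 - (r + 1))) = _
        rw [show k - 1 - r = (k - 2 - r) + 1 by omega,
          show k - 1 - (r + 1) = k - 2 - r by omega]
        exact Sym2.eq_swap
      refine ⟨k - 2 - p, k - 2 - q, by omega, by omega, ?_, ?_⟩
      · rw [← hh p hp, ← hh q hq]; exact hneq
      · rw [← hh p hp, ← hh q hq]; exact hcol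


/-- orientation-free version of core properness -/
lemma core_proper' {k m : ℕ} (hk : 5 ≤ k) {p₁ q₁ p₂ q₂ : ℕ × ℕ}
    (h₁ : (Gcore k m).Adj p₁ q₁) (h₂ : (Gcore k m).Adj p₂ q₂)
    (hne : s(p₁, q₁) ≠ s(p₂, q₂))
    (hsh : p₁ = p₂ ∨ p₁ = q₂ ∨ q₁ = p₂ ∨ q₁ = q₂) :
    colcore k m s(p₁, q₁) ≠ colcore k m s(p₂, q₂) := by
  have e₁ : s(p₁, q₁) = s(q₁, p₁) := Sym2.eq_swap
  have e₂ : s(p₂, q₂) = s(q₂, p₂) := Sym2.eq_swap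
  rcases h₁ with st₁ | st₁ <;> rcases h₂ with st₂ | st₂
  · rw [colcore_step st₁.1, colcore_step st₂.1]
    exact core_proper hk st₁ st₂ hne hsh
  · rw [colcore_step st₁.1, e₂, colcore_step st₂.1]
    exact core_proper hk st₁ st₂ (by rw [← e₂]; exact hne) (by tauto)
  · rw [e₁, colcore_step st₁.1, colcore_step st₂.1]
    exact core_proper hk st₁ st₂ (by rw [← e₁]; exact hne) (by tauto)
  · rw [e₁, colcore_step st₁.1, e₂, colcore_step st₂.1]
    exact core_proper hk st₁ st₂ (by rw [← e₁, ← e₂]; exact hne) (by tauto)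

lemma adj_box {k m : ℕ} {p q : ℕ × ℕ} (h : (Gcore k m).Adj p q) :
    (p.1 < k ∧ p.2 < m) ∧ (q.1 < k ∧ q.2 < m) := by
  rcases h with h | h <;> obtain ⟨e1, l1, c1, c2, _, _, _⟩ := h
  · exact ⟨⟨by omega, c1⟩, ⟨by omega, c2⟩⟩
  · exact ⟨⟨by omega, c2⟩, ⟨by omega, c1⟩⟩

def fenc (k n : ℕ) (hn : 0 < n) (p : ℕ × ℕ) : Fin n :=
  if h : p.1 + k * p.2 < n then ⟨p.1 + k * p.2, h⟩ else ⟨0, hn⟩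

lemma box_lt {k m n : ℕ} (hkm : k * m ≤ n) {p : ℕ × ℕ}
    (hp : p.1 < k ∧ p.2 < m) : p.1 + k * p.2 < n := by
  have h1 : p.1 + k * p.2 < k * (p.2 + 1) := by
    have : k * (p.2 + 1) = k * p.2 + k := by ring
    omega
  have h2 : k * (p.2 + 1) ≤ k * m := Nat.mul_le_mul_left k (by omega)
  omega

lemma fenc_box {k m n : ℕ} (hn : 0 < n) (hkm : k * m ≤ n) {p : ℕ × ℕ}
    (hp : p.1 < k ∧ p.2 < m) : (fenc k n hn p).val = p.1 + k * p.2 := by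
  unfold fenc; rw [dif_pos (box_lt hkm hp)]

lemma fenc_injOn {k m n : ℕ} (hn : 0 < n) (hkm : k * m ≤ n) {p q : ℕ × ℕ}
    (hp : p.1 < k ∧ p.2 < m) (hq : q.1 < k ∧ q.2 < m)
    (h : fenc k n hn p = fenc k n hn q) : p = q := by
  have h' : p.1 + k * p.2 = q.1 + k * q.2 := by
    rw [← fenc_box hn hkm hp, ← fenc_box hn hkm hq, h]
  have e1 : (p.1 + k * p.2) % k = p.1 := by
    rw [Nat.add_mul_mod_self_left]; exact Nat.mod_eq_of_lt hp.1
  have e2 : (q.1 + k * q.2) % k = q.1 := by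
    rw [Nat.add_mul_mod_self_left]; exact Nat.mod_eq_of_lt hq.1
  have hk0 : 0 < k := by omega
  have d1 : (p.1 + k * p.2) / k = p.2 := by
    rw [Nat.add_mul_div_left _ _ hk0, Nat.div_eq_of_lt hp.1, Nat.zero_add]
  have d2 : (q.1 + k * q.2) / k = q.2 := by
    rw [Nat.add_mul_div_left _ _ hk0, Nat.div_eq_of_lt hq.1, Nat.zero_add]
  refine Prod.ext_iff.mpr ⟨?_, ?_⟩
  · rw [← e1, ← e2, h']
  · rw [← d1, ← d2, h']

def rdec (k : ℕ) {n : ℕ} (x : Fin n) : ℕ × ℕ := (x.val % k, x.val / k)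

lemma rdec_fenc {k m n : ℕ} (hn : 0 < n) (hkm : k * m ≤ n) {p : ℕ × ℕ}
    (hp : p.1 < k ∧ p.2 < m) : rdec k (fenc k n hn p) = p := by
  unfold rdec
  rw [fenc_box hn hkm hp]
  have hk0 : 0 < k := by omega
  refine Prod.ext_iff.mpr ⟨?_, ?_⟩
  · simp only
    rw [Nat.add_mul_mod_self_left]; exact Nat.mod_eq_of_lt hp.1
  · simp only
    rw [Nat.add_mul_div_left _ _ hk0, Nat.div_eq_of_lt hp.1, Nat.zero_add]

/-- the final graph on `Fin n` -/
def GF (k m n : ℕ) (hn : 0 < n) : SimpleGraph (Fin n) where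
  Adj x y := x ≠ y ∧ ∃ p q, (Gcore k m).Adj p q ∧ fenc k n hn p = x ∧ fenc k n hn q = y
  symm := by
    constructor
    rintro x y ⟨hne, p, q, h, hp, hq⟩
    exact ⟨hne.symm, q, p, h.symm, hq, hp⟩
  loopless := ⟨fun x h => h.1 rfl⟩

/-- the final coloring -/
def colF (k m n : ℕ) : Sym2 (Fin n) → ℕ := fun e => colcore k m (Sym2.map (rdec k) e)

lemma GF_proper {k m n : ℕ} (hk : 5 ≤ k) (hn : 0 < n) (hkm : k * m ≤ n) :
    IsProperEdgeColoring (GF k m n hn) (colF k m n) := by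
  intro e₁ he₁ e₂ he₂ hne hsh
  induction' e₁ using Sym2.ind with x₁ y₁
  induction' e₂ using Sym2.ind with x₂ y₂
  rw [mem_edgeSet] at he₁ he₂
  obtain ⟨hxy₁, p₁, q₁, hadj₁, hp₁, hq₁⟩ := he₁
  obtain ⟨hxy₂, p₂, q₂, hadj₂, hp₂, hq₂⟩ := he₂
  obtain ⟨bp₁, bq₁⟩ := adj_box hadj₁
  obtain ⟨bp₂, bq₂⟩ := adj_box hadj₂
  have hc₁ : colF k m n s(x₁, y₁) = colcore k m s(p₁, q₁) := by
    rw [← hp₁, ← hq₁]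
    unfold colF
    rw [Sym2.map_pair_eq, rdec_fenc hn hkm bp₁, rdec_fenc hn hkm bq₁]
  have hc₂ : colF k m n s(x₂, y₂) = colcore k m s(p₂, q₂) := by
    rw [← hp₂, ← hq₂]
    unfold colF
    rw [Sym2.map_pair_eq, rdec_fenc hn hkm bp₂, rdec_fenc hn hkm bq₂]
  rw [hc₁, hc₂]
  have hcne : s(p₁, q₁) ≠ s(p₂, q₂) := by
    intro h
    apply hne
    have := congrArg (Sym2.map (fenc k n hn)) h
    rw [Sym2.map_pair_eq, Sym2.map_pair_eq, hp₁, hq₁, hp₂, hq₂] at this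
    exact this
  have hshc : p₁ = p₂ ∨ p₁ = q₂ ∨ q₁ = p₂ ∨ q₁ = q₂ := by
    obtain ⟨v, hv₁, hv₂⟩ := hsh
    rw [Sym2.mem_iff] at hv₁ hv₂
    rcases hv₁ with rfl | rfl <;> rcases hv₂ with h | h
    · exact Or.inl (fenc_injOn hn hkm bp₁ bp₂ (by rw [hp₁, hp₂, h]))
    · exact Or.inr (Or.inl (fenc_injOn hn hkm bp₁ bq₂ (by rw [hp₁, hq₂, h])))
    · exact Or.inr (Or.inr (Or.inl (fenc_injOn hn hkm bq₁ bp₂ (by rw [hq₁, hp₂, h]))))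
    · exact Or.inr (Or.inr (Or.inr (fenc_injOn hn hkm bq₁ bq₂ (by rw [hq₁, hq₂, h]))))
  exact core_proper' hk hadj₁ hadj₂ hcne hshc


lemma GF_noRainbow {k m n : ℕ} (hk : 5 ≤ k) (hn : 0 < n) (hkm : k * m ≤ n) :
    ¬ HasRainbowCopy (GF k m n hn) (colF k m n) (pathGraph k) := by
  rintro ⟨A, ⟨φ⟩, hinjOn⟩
  -- the path as a function ℕ → Fin n
  set y : ℕ → Fin n := fun i => if h : i < k then (φ.symm ⟨i, h⟩ : A.verts).val else ⟨0, hn⟩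
    with hy
  have hyv : ∀ i (h : i < k), y i = (φ.symm ⟨i, h⟩ : A.verts).val := by
    intro i h; rw [hy]; simp only [dif_pos h]
  have hyinj : ∀ i < k, ∀ j < k, y i = y j → i = j := by
    intro i hi j hj hij
    rw [hyv i hi, hyv j hj] at hij
    have h1 : (φ.symm ⟨i, hi⟩ : A.verts) = (φ.symm ⟨j, hj⟩ : A.verts) := Subtype.ext hij
    have h2 := φ.symm.toEquiv.injective h1
    have h3 : (⟨i, hi⟩ : Fin k) = ⟨j, hj⟩ := h2
    exact congrArg Fin.val h3
  have hyadjA : ∀ i, i + 1 < k → A.Adj (y i) (y (i + 1)) := by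
    intro i hi
    have hik : i < k := by omega
    have hpg : (pathGraph k).Adj ⟨i, hik⟩ ⟨i + 1, hi⟩ := by
      rw [pathGraph_adj]; left; rfl
    have h2 : A.coe.Adj (φ.symm ⟨i, hik⟩) (φ.symm ⟨i + 1, hi⟩) := by
      rw [Iso.map_adj_iff φ.symm]; exact hpg
    rw [Subgraph.coe_adj] at h2
    rw [hyv i hik, hyv (i + 1) hi]
    exact h2
  have hyadjG : ∀ i, i + 1 < k → (GF k m n hn).Adj (y i) (y (i + 1)) :=
    fun i hi => A.adj_sub (hyadjA i hi)
  -- decode to the core graph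
  set w : ℕ → ℕ × ℕ := fun i => rdec k (y i) with hw
  have hwadj : ∀ i, i + 1 < k → (Gcore k m).Adj (w i) (w (i + 1)) := by
    intro i hi
    obtain ⟨hne, p, q, hadj, hp, hq⟩ := hyadjG i hi
    obtain ⟨bp, bq⟩ := adj_box hadj
    have e1 : w i = p := by rw [hw]; simp only; rw [← hp, rdec_fenc hn hkm bp]
    have e2 : w (i + 1) = q := by rw [hw]; simp only; rw [← hq, rdec_fenc hn hkm bq]
    rw [e1, e2]; exact hadj
  have hfw : ∀ i, i + 1 < k → fenc k n hn (w i) = y i ∧ fenc k n hn (w (i + 1)) = y (i + 1) := by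
    intro i hi
    obtain ⟨hne, p, q, hadj, hp, hq⟩ := hyadjG i hi
    obtain ⟨bp, bq⟩ := adj_box hadj
    have e1 : w i = p := by rw [hw]; simp only; rw [← hp, rdec_fenc hn hkm bp]
    have e2 : w (i + 1) = q := by rw [hw]; simp only; rw [← hq, rdec_fenc hn hkm bq]
    rw [e1, e2]; exact ⟨hp, hq⟩
  have hfenc_all : ∀ i, i < k → fenc k n hn (w i) = y i := by
    intro i hi
    by_cases h : i + 1 < k
    · exact (hfw i h).1
    · have hik : 1 ≤ i := by omega
      have h' : (i - 1) + 1 < k := by omega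
      have := (hfw (i - 1) h').2
      rw [show i - 1 + 1 = i by omega] at this
      exact this
  have hwinj : ∀ i < k, ∀ j < k, w i = w j → i = j := by
    intro i hi j hj hij
    apply hyinj i hi j hj
    rw [← hfenc_all i hi, ← hfenc_all j hj, hij]
  obtain ⟨p, q, hp, hq, hneq, hcol⟩ := coreNR hk w hwinj hwadj
  -- lift the collision
  have hmem : ∀ r, r + 1 < k → s(y r, y (r + 1)) ∈ A.edgeSet := by
    intro r hr
    rw [Subgraph.mem_edgeSet]
    exact hyadjA r hr
  have hcolF : ∀ r, r + 1 < k →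
      colF k m n s(y r, y (r + 1)) = colcore k m s(w r, w (r + 1)) := by
    intro r hr
    unfold colF
    rw [Sym2.map_pair_eq]
  have hEne : s(y p, y (p + 1)) ≠ s(y q, y (q + 1)) := by
    intro h
    apply hneq
    have := congrArg (Sym2.map (rdec k)) h
    rw [Sym2.map_pair_eq, Sym2.map_pair_eq] at this
    exact this
  exact hEne (hinjOn (hmem p hp) (hmem q hq)
    (by rw [hcolF p hp, hcolF q hq]; exact hcol))


/-- the path subgraph spanned by a path function -/
def pathSub {V : Type*} (G : SimpleGraph V) (k : ℕ) (y : ℕ → V)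
    (hadj : ∀ i, i + 1 < k → G.Adj (y i) (y (i + 1))) : G.Subgraph where
  verts := {v | ∃ i, i < k ∧ y i = v}
  Adj a b := ∃ i, i + 1 < k ∧ ((y i = a ∧ y (i + 1) = b) ∨ (y i = b ∧ y (i + 1) = a))
  adj_sub := by
    rintro a b ⟨i, hi, ⟨rfl, rfl⟩ | ⟨rfl, rfl⟩⟩
    · exact hadj i hi
    · exact (hadj i hi).symm
  edge_vert := by
    rintro a b ⟨i, hi, ⟨rfl, rfl⟩ | ⟨rfl, rfl⟩⟩
    · exact ⟨i, by omega, rfl⟩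
    · exact ⟨i + 1, by omega, rfl⟩
  symm := by
    constructor
    rintro a b ⟨i, hi, h | h⟩
    · exact ⟨i, hi, Or.inr h⟩
    · exact ⟨i, hi, Or.inl h⟩

lemma pathSub_verts {V : Type*} (G : SimpleGraph V) (k : ℕ) (y : ℕ → V) (hadj) :
    (pathSub G k y hadj).verts = {v | ∃ i, i < k ∧ y i = v} := rfl

noncomputable def pathSub_iso {V : Type*} (G : SimpleGraph V) (k : ℕ) (y : ℕ → V)
    (hadj : ∀ i, i + 1 < k → G.Adj (y i) (y (i + 1)))
    (hinj : ∀ i < k, ∀ j < k, y i = y j → i = j) :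
    (pathSub G k y hadj).coe ≃g pathGraph k := by
  have hbij : Function.Bijective
      (fun i : Fin k => (⟨y i.val, ⟨i.val, i.isLt, rfl⟩⟩ : (pathSub G k y hadj).verts)) := by
    constructor
    · intro i j hij
      have := congrArg Subtype.val hij
      exact Fin.ext (hinj i.val i.isLt j.val j.isLt this)
    · rintro ⟨v, i, hik, rfl⟩
      exact ⟨⟨i, hik⟩, rfl⟩
  refine ⟨(Equiv.ofBijective _ hbij).symm, ?_⟩
  intro a b
  obtain ⟨i, rfl⟩ := (Equiv.ofBijective _ hbij).surjective a
  obtain ⟨j, rfl⟩ := (Equiv.ofBijective _ hbij).surjective b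
  rw [Equiv.symm_apply_apply, Equiv.symm_apply_apply]
  show (pathGraph k).Adj i j ↔ (pathSub G k y hadj).coe.Adj _ _
  rw [Subgraph.coe_adj, pathGraph_adj]
  constructor
  · rintro (h | h)
    · exact ⟨i.val, by omega, Or.inl ⟨rfl, by rw [h]; rfl⟩⟩
    · exact ⟨j.val, by omega, Or.inr ⟨rfl, by rw [h]; rfl⟩⟩
  · rintro ⟨r, hr, ⟨h1, h2⟩ | ⟨h1, h2⟩⟩
    · have e1 : r = i.val := hinj r (by omega) i.val i.isLt h1
      have e2 : r + 1 = j.val := hinj (r + 1) (by omega) j.val j.isLt h2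
      left; omega
    · have e1 : r = j.val := hinj r (by omega) j.val j.isLt h1
      have e2 : r + 1 = i.val := hinj (r + 1) (by omega) i.val i.isLt h2
      right; omega


def gfun (m t : ℕ) (ht : 0 < t) (k : ℕ) (v : Fin t → Fin m) (j : ℕ) : ℕ :=
  if j = 0 then (v ⟨0 % t, Nat.mod_lt _ ht⟩).val
  else if j = 2 ∨ j = 3 then (v ⟨1 % t, Nat.mod_lt _ ht⟩).val
  else if hub k j then 0
  else if j % 2 = 1 then (v ⟨((j - 1) / 2) % t, Nat.mod_lt _ ht⟩).val
  else (v ⟨((j - 2) / 2) % t, Nat.mod_lt _ ht⟩).val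

lemma gfun_lt {m t : ℕ} (ht : 0 < t) {k : ℕ} (v : Fin t → Fin m) (hm : 0 < m) (j : ℕ) :
    gfun m t ht k v j < m := by
  unfold gfun; split_ifs <;> first | exact (v _).isLt | exact hm

lemma gfun_hub {m t : ℕ} (ht : 0 < t) {k : ℕ} (v : Fin t → Fin m) {j : ℕ}
    (h : hub k j) : gfun m t ht k v j = 0 := by
  unfold gfun
  rw [if_neg (by rintro rfl; exact not_hub_zero k h),
    if_neg (by rintro (rfl | rfl); exacts [not_hub_two k h, not_hub_three k h]),
    if_pos h]

lemma gfun_mm {m t : ℕ} (ht : 0 < t) {k : ℕ} (v : Fin t → Fin m) (hk : 5 ≤ k) {j : ℕ}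
    (hj : j + 1 < k) (h1 : ¬ hub k j) (h2 : ¬ hub k (j + 1)) :
    gfun m t ht k v j = gfun m t ht k v (j + 1) := by
  rcases mm_pos hk hj h1 h2 with h | ⟨hodd, hk7, hj2⟩
  · subst h
    unfold gfun
    norm_num
  · subst hj2
    have e2 : k - 2 + 1 = k - 1 := by omega
    rw [e2]
    have L : gfun m t ht k v (k - 2) = (v ⟨((k - 3) / 2) % t, Nat.mod_lt _ ht⟩).val := by
      unfold gfun
      rw [if_neg (by omega), if_neg (by omega), if_neg h1, if_pos (by omega)]
      exact congrArg (fun x : ℕ => (v ⟨x / 2 % t, Nat.mod_lt (x / 2) ht⟩).val)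
        (show k - 2 - 1 = k - 3 by omega)
    have R : gfun m t ht k v (k - 1) = (v ⟨((k - 3) / 2) % t, Nat.mod_lt _ ht⟩).val := by
      unfold gfun
      rw [if_neg (by omega), if_neg (by omega), if_neg (e2 ▸ h2), if_neg (by omega)]
      exact congrArg (fun x : ℕ => (v ⟨x / 2 % t, Nat.mod_lt (x / 2) ht⟩).val)
        (show k - 1 - 2 = k - 3 by omega)
    rw [L, R]

lemma not_hub_odd {k j : ℕ} (hodd : j % 2 = 1) (hne1 : j ≠ 1) : ¬ hub k j := by
  unfold hub; by_cases h5 : k = 5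
  · rw [if_pos h5]; omega
  · rw [if_neg h5]; omega

def evfun (j : ℕ) : ℕ := if j = 0 then 0 else if j = 1 then 2 else 2 * j + 1

lemma evfun_lt {k t j : ℕ} (h2k : 2 * t ≤ k) (hk : 5 ≤ k) (hj : j < t) : evfun j < k := by
  unfold evfun; split_ifs <;> omega

lemma gfun_ev {m t : ℕ} (ht : 0 < t) (h2t : 2 ≤ t) {k : ℕ} (v : Fin t → Fin m)
    (jf : Fin t) : gfun m t ht k v (evfun jf.val) = (v jf).val := by
  unfold evfun
  by_cases h0 : jf.val = 0
  · rw [if_pos h0]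
    unfold gfun
    rw [if_pos rfl]
    exact congrArg (fun x => (v x).val) (Fin.ext (by
      show 0 % t = jf.val
      rw [Nat.zero_mod]; omega))
  · by_cases h1 : jf.val = 1
    · rw [if_neg h0, if_pos h1]
      unfold gfun
      rw [if_neg (by omega), if_pos (Or.inl rfl)]
      exact congrArg (fun x => (v x).val) (Fin.ext (by
        show 1 % t = jf.val
        rw [Nat.mod_eq_of_lt (by omega)]; omega))
    · rw [if_neg h0, if_neg h1]
      unfold gfun
      have hj2 : 2 ≤ jf.val := by omega
      rw [if_neg (by omega), if_neg (by omega),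
        if_neg (not_hub_odd (by omega) (by omega)), if_pos (by omega)]
      exact congrArg (fun x => (v x).val) (Fin.ext (by
        show (2 * jf.val + 1 - 1) / 2 % t = jf.val
        rw [show 2 * jf.val + 1 - 1 = 2 * jf.val by omega,
          Nat.mul_div_cancel_left _ (by omega : 0 < 2), Nat.mod_eq_of_lt jf.isLt]))

lemma count_lower {k m n : ℕ} (hk : 5 ≤ k) (hm : 0 < m) (hn : 0 < n) (hkm : k * m ≤ n) :
    m ^ (k / 2) ≤ _root_.copyCount (GF k m n hn) (pathGraph k) := by
  classical
  set t := k / 2 with htdef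
  have ht : 0 < t := by omega
  have h2t : 2 ≤ t := by omega
  have h2k : 2 * t ≤ k := by omega
  -- the core path for a tuple v
  have hbox : ∀ (v : Fin t → Fin m) (j : ℕ), j < k →
      ((j, gfun m t ht k v j) : ℕ × ℕ).1 < k ∧ ((j, gfun m t ht k v j) : ℕ × ℕ).2 < m :=
    fun v j hj => ⟨hj, gfun_lt ht v hm j⟩
  have hcoreadj : ∀ (v : Fin t → Fin m) (j : ℕ), j + 1 < k →
      (Gcore k m).Adj (j, gfun m t ht k v j) (j + 1, gfun m t ht k v (j + 1)) := by
    intro v j hj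
    left
    exact ⟨rfl, hj, gfun_lt ht v hm j, gfun_lt ht v hm (j + 1),
      fun h => gfun_hub ht v h, fun h => gfun_hub ht v h,
      fun h1 h2 => gfun_mm ht v hk hj h1 h2⟩
  set yv : (Fin t → Fin m) → ℕ → Fin n :=
    fun v j => fenc k n hn (j, gfun m t ht k v j) with hyv
  have hyadj : ∀ (v : Fin t → Fin m) (i : ℕ), i + 1 < k →
      (GF k m n hn).Adj (yv v i) (yv v (i + 1)) := by
    intro v i hi
    refine ⟨?_, _, _, hcoreadj v i hi, rfl, rfl⟩
    intro h
    have := fenc_injOn hn hkm (hbox v i (by omega)) (hbox v (i + 1) hi) h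
    simp only [Prod.mk.injEq] at this
    omega
  have hyinj : ∀ (v : Fin t → Fin m), ∀ i < k, ∀ j < k, yv v i = yv v j → i = j := by
    intro v i hi j hj h
    have := fenc_injOn hn hkm (hbox v i hi) (hbox v j hj) h
    simp only [Prod.mk.injEq] at this
    exact this.1
  set Ψ : (Fin t → Fin m) → (GF k m n hn).Subgraph :=
    fun v => pathSub (GF k m n hn) k (yv v) (hyadj v) with hΨ
  have hΨinj : Function.Injective Ψ := by
    intro v v' h
    have hverts := congrArg Subgraph.verts h
    rw [hΨ] at hverts
    have hg : ∀ j, j < k → gfun m t ht k v j = gfun m t ht k v' j := by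
      intro j hj
      have hmem : yv v j ∈ (pathSub (GF k m n hn) k (yv v) (hyadj v)).verts :=
        ⟨j, hj, rfl⟩
      rw [hverts] at hmem
      obtain ⟨i, hik, hyi⟩ := hmem
      have := fenc_injOn hn hkm (hbox v' i hik) (hbox v j hj) hyi
      simp only [Prod.mk.injEq] at this
      rw [← this.2, this.1]
    funext jf
    refine Fin.ext ?_
    rw [← gfun_ev ht h2t v jf, ← gfun_ev ht h2t v' jf]
    exact hg (evfun jf.val) (evfun_lt h2k hk jf.isLt)
  have hsub : Set.range Ψ ⊆
      {A : (GF k m n hn).Subgraph | Nonempty (A.coe ≃g pathGraph k)} := by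
    rintro A ⟨v, rfl⟩
    exact ⟨pathSub_iso (GF k m n hn) k (yv v) (hyadj v) (hyinj v)⟩
  haveI : Finite ((GF k m n hn).Subgraph) := by
    apply Finite.of_injective
      (fun A : (GF k m n hn).Subgraph => (A.verts, A.Adj))
    intro A B h
    exact Subgraph.ext (congrArg Prod.fst h) (congrArg Prod.snd h)
  have e1 : m ^ t = Nat.card (Fin t → Fin m) := by
    rw [Nat.card_eq_fintype_card, Fintype.card_fun]
    simp
  have e2 : Nat.card (Fin t → Fin m) = (Set.range Ψ).ncard := by
    rw [← Nat.card_coe_set_eq, Nat.card_range_of_injective hΨinj]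
  have e3 : (Set.range Ψ).ncard ≤
      Set.ncard {A : (GF k m n hn).Subgraph | Nonempty (A.coe ≃g pathGraph k)} :=
    Set.ncard_le_ncard hsub (Set.toFinite _)
  unfold _root_.copyCount
  omega

end RainbowPath

open RainbowPath in
/-- Lower bound of Theorem 1.1: ex(n, P_k, rainbow-P_k) = Ω(n^⌊k/2⌋). -/
theorem path_rainbow_lower (k : ℕ) (hk : 5 ≤ k) :
    ∃ c : ℝ, 0 < c ∧ ∃ n₀ : ℕ, ∀ n ≥ n₀,
      ∃ (G : SimpleGraph (Fin n)) (col : Sym2 (Fin n) → ℕ),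
        IsProperEdgeColoring G col ∧ ¬ HasRainbowCopy G col (pathGraph k) ∧
        c * (n : ℝ) ^ (k / 2) ≤ (_root_.copyCount G (pathGraph k) : ℝ) := by
  have hkR : (0 : ℝ) < 4 * (k : ℝ) := by positivity
  refine ⟨(4 * (k : ℝ))⁻¹ ^ (k / 2), by positivity, 4 * k, fun n hn4k => ?_⟩
  have hn : 0 < n := by omega
  set m := n / (2 * k) with hmdef
  have hm : 0 < m := Nat.div_pos (by omega) (by omega)
  have hkm : k * m ≤ n := by
    calc k * m ≤ (2 * k) * m := Nat.mul_le_mul_right m (by omega)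
      _ ≤ n := by rw [Nat.mul_comm]; exact Nat.div_mul_le_self n (2 * k)
  refine ⟨GF k m n hn, colF k m n, GF_proper hk hn hkm, GF_noRainbow hk hn hkm, ?_⟩
  have hcount := count_lower hk hm hn hkm
  have hq : n ≤ 4 * k * m := by
    have h1 : 2 * k * m + n % (2 * k) = n := Nat.div_add_mod n (2 * k)
    have h2 : n % (2 * k) < 2 * k := Nat.mod_lt _ (by omega)
    have h3 : 2 * k = 2 * k * 1 := by ring
    have h3' : 2 * k * 1 ≤ 2 * k * m := Nat.mul_le_mul_left (2 * k) hm
    have h4 : 4 * k * m = 2 * k * m + 2 * k * m := by ring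
    omega
  have hcast : (n : ℝ) ≤ 4 * (k : ℝ) * m := by
    have := (Nat.cast_le (α := ℝ)).mpr hq
    push_cast at this
    linarith
  calc (4 * (k : ℝ))⁻¹ ^ (k / 2) * (n : ℝ) ^ (k / 2)
      = ((4 * (k : ℝ))⁻¹ * n) ^ (k / 2) := (mul_pow _ _ _).symm
    _ ≤ (m : ℝ) ^ (k / 2) := by
        apply pow_le_pow_left₀ (by positivity)
        rw [← div_eq_inv_mul, div_le_iff₀ hkR]
        linarith
    _ ≤ (_root_.copyCount (GF k m n hn) (pathGraph k) : ℝ) := by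
        have := (Nat.cast_le (α := ℝ)).mpr hcount
        push_cast at this
        exact this
end

section
/- For every integer k ≥ 5 there exists a constant C such that for all n, every simple graph G on n vertices that admits a proper edge-coloring with no rainbow copy of the path P_k contains at most C·n^⌊k/2⌋ copies of P_k. (Upper bound of Theorem 1.1: ex(n, P_k, rainbow-P_k) = O(n^⌊k/2⌋).) -/
open SimpleGraph

namespace RainbowAux

variable {V : Type*} {β : Type*}

/-- `f` lists the vertices of a path with `k` vertices in `G`. -/
def IsPathSeq {k : ℕ} (G : SimpleGraph V) (f : Fin k → V) : Prop :=
  Function.Injective f ∧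
    ∀ (j : ℕ) (h : j + 1 < k), G.Adj (f ⟨j, Nat.lt_of_succ_lt h⟩) (f ⟨j + 1, h⟩)

lemma proper_unique {G : SimpleGraph V} {col : Sym2 V → β}
    (hp : IsProperEdgeColoring G col) {u w w' : V}
    (h1 : G.Adj u w) (h2 : G.Adj u w')
    (hc : col s(u, w) = col s(u, w')) : w = w' := by
  by_contra hne
  have hne' : s(u, w) ≠ s(u, w') := fun h => hne (Sym2.congr_right.mp h)
  exact hp _ h1 _ h2 hne' ⟨u, by simp, by simp⟩ hc

/-- The relation of the path subgraph spanned by a path sequence. -/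
def pathRel {k : ℕ} (f : Fin k → V) (a b : V) : Prop :=
  ∃ u v : Fin k, (pathGraph k).Adj u v ∧ f u = a ∧ f v = b

/-- The path subgraph spanned by a path sequence. -/
def pathSubgraph {k : ℕ} (G : SimpleGraph V) (f : Fin k → V)
    (hf : IsPathSeq G f) : G.Subgraph where
  verts := Set.range f
  Adj := pathRel f
  adj_sub := by
    rintro a b ⟨u, v, huv, rfl, rfl⟩
    rw [pathGraph_adj] at huv
    rcases huv with h | h
    · have hlt : u.val + 1 < k := by omega
      have ha := hf.2 u.val hlt
      have e1 : (⟨u.val, Nat.lt_of_succ_lt hlt⟩ : Fin k) = u := Fin.eta u _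
      have e2 : (⟨u.val + 1, hlt⟩ : Fin k) = v := Fin.ext h
      rwa [e1, e2] at ha
    · have hlt : v.val + 1 < k := by omega
      have ha := (hf.2 v.val hlt).symm
      have e1 : (⟨v.val, Nat.lt_of_succ_lt hlt⟩ : Fin k) = v := Fin.eta v _
      have e2 : (⟨v.val + 1, hlt⟩ : Fin k) = u := Fin.ext h
      rwa [e1, e2] at ha
  edge_vert := by rintro a b ⟨u, v, huv, rfl, rfl⟩; exact ⟨u, rfl⟩
  symm := ⟨by rintro a b ⟨u, v, huv, rfl, rfl⟩; exact ⟨v, u, huv.symm, rfl, rfl⟩⟩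

lemma pathSubgraph_adj {k : ℕ} {G : SimpleGraph V} {f : Fin k → V} (hf : IsPathSeq G f)
    {a b : V} : (pathSubgraph G f hf).Adj a b ↔ pathRel f a b := Iff.rfl

lemma pathSubgraph_verts {k : ℕ} {G : SimpleGraph V} {f : Fin k → V} (hf : IsPathSeq G f) :
    (pathSubgraph G f hf).verts = Set.range f := rfl

noncomputable def pathSubgraphIso {k : ℕ} {G : SimpleGraph V} (f : Fin k → V)
    (hf : IsPathSeq G f) : (pathSubgraph G f hf).coe ≃g pathGraph k where
  toEquiv := (Equiv.setCongr (pathSubgraph_verts hf)).trans (Equiv.ofInjective f hf.1).symm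
  map_rel_iff' := by
    intro a b
    simp only [Equiv.trans_apply, Equiv.coe_fn_mk, Equiv.setCongr_apply]
    rw [Subgraph.coe_adj, pathSubgraph_adj]
    constructor
    · rintro h
      refine ⟨_, _, h, ?_, ?_⟩ <;>
        simpa using Equiv.apply_ofInjective_symm hf.1 _
    · rintro ⟨u, v, huv, h1, h2⟩
      have e1 : (Equiv.ofInjective f hf.1).symm ⟨(a : V), by
          rw [← pathSubgraph_verts hf]; exact a.2⟩ = u := by
        apply hf.1
        rw [Equiv.apply_ofInjective_symm hf.1, h1]
      have e2 : (Equiv.ofInjective f hf.1).symm ⟨(b : V), by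
          rw [← pathSubgraph_verts hf]; exact b.2⟩ = v := by
        apply hf.1
        rw [Equiv.apply_ofInjective_symm hf.1, h2]
      rw [← e1, ← e2] at huv
      convert huv
end RainbowAux

namespace RainbowAux

variable {V : Type*} {β : Type*}

lemma subgraph_eq_pathSubgraph {k : ℕ} {G : SimpleGraph V} (A : G.Subgraph)
    (φ : A.coe ≃g pathGraph k) :
    ∃ hf : IsPathSeq G (fun i => (φ.symm i : V)), A = pathSubgraph G _ hf := by
  set f : Fin k → V := fun i => (φ.symm i : V) with hfdef
  have hinj : Function.Injective f :=
    Subtype.val_injective.comp φ.symm.toEquiv.injective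
  have hadj : ∀ (j : ℕ) (h : j + 1 < k),
      G.Adj (f ⟨j, Nat.lt_of_succ_lt h⟩) (f ⟨j + 1, h⟩) := by
    intro j h
    have hP : (pathGraph k).Adj ⟨j, Nat.lt_of_succ_lt h⟩ ⟨j + 1, h⟩ := by
      rw [pathGraph_adj]; left; rfl
    have h2 := φ.symm.map_rel_iff.mpr hP
    rw [Subgraph.coe_adj] at h2
    exact A.adj_sub h2
  refine ⟨⟨hinj, hadj⟩, ?_⟩
  have hverts : A.verts = Set.range f := by
    ext x
    constructor
    · intro hx
      exact ⟨φ ⟨x, hx⟩, by simp [hfdef]⟩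
    · rintro ⟨i, rfl⟩
      exact (φ.symm i).2
  apply Subgraph.ext hverts
  ext a b
  show A.Adj a b ↔ pathRel f a b
  constructor
  · intro ha
    have hav : a ∈ A.verts := A.edge_vert ha
    have hbv : b ∈ A.verts := A.edge_vert ha.symm
    refine ⟨φ ⟨a, hav⟩, φ ⟨b, hbv⟩, ?_, by simp [hfdef], by simp [hfdef]⟩
    rw [φ.map_rel_iff]
    exact ha
  · rintro ⟨u, v, huv, rfl, rfl⟩
    have h2 := φ.symm.map_rel_iff.mpr huv
    rwa [Subgraph.coe_adj] at h2

end RainbowAux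

namespace RainbowAux

variable {V : Type*} {β : Type*}

lemma copyCount_le_card_pathSeq (k : ℕ) (G : SimpleGraph V) [Finite V] :
    _root_.copyCount G (pathGraph k) ≤ Nat.card {f : Fin k → V // IsPathSeq G f} := by
  classical
  rw [_root_.copyCount, ← Nat.card_coe_set_eq]
  have : ∀ A : {A : G.Subgraph // Nonempty (A.coe ≃g pathGraph k)},
      ∃ f : {f : Fin k → V // IsPathSeq G f}, A.1 = pathSubgraph G f.1 f.2 := by
    rintro ⟨A, hA⟩
    obtain ⟨hf, hEq⟩ := subgraph_eq_pathSubgraph A hA.some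
    exact ⟨⟨_, hf⟩, hEq⟩
  choose Ψ hΨ using this
  have hinj : Function.Injective Ψ := by
    intro x y hxy
    apply Subtype.ext
    rw [hΨ x, hΨ y]
    have hff : (Ψ x).1 = (Ψ y).1 := by rw [hxy]
    apply Subgraph.ext
    · rw [pathSubgraph_verts, pathSubgraph_verts, hff]
    · show pathRel (Ψ x).1 = pathRel (Ψ y).1
      rw [hff]
  exact Nat.card_le_card_of_injective Ψ hinj

end RainbowAux

namespace RainbowAux

variable {V : Type*} {β : Type*}

lemma pathRel_eq_edge {k : ℕ} {f : Fin k → V} {a b : V} (h : pathRel f a b) :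
    ∃ (w : ℕ) (hw : w + 1 < k),
      s(a, b) = s(f ⟨w, Nat.lt_of_succ_lt hw⟩, f ⟨w + 1, hw⟩) := by
  obtain ⟨u, v, huv, rfl, rfl⟩ := h
  rw [pathGraph_adj] at huv
  rcases huv with h | h
  · refine ⟨u.val, by omega, ?_⟩
    have e1 : f u = f ⟨u.val, by omega⟩ := congrArg f (Fin.eta u _).symm
    have e2 : f v = f ⟨u.val + 1, by omega⟩ := congrArg f (Fin.ext h.symm)
    rw [← e1, ← e2]
  · refine ⟨v.val, by omega, ?_⟩
    rw [Sym2.eq_swap]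
    have e1 : f v = f ⟨v.val, by omega⟩ := congrArg f (Fin.eta v _).symm
    have e2 : f u = f ⟨v.val + 1, by omega⟩ := congrArg f (Fin.ext h.symm)
    rw [← e1, ← e2]

lemma hasRainbowCopy_of_rainbow_seq {k : ℕ} {G : SimpleGraph V} {col : Sym2 V → β}
    {f : Fin k → V} (hf : IsPathSeq G f)
    (hr : ∀ (w w' : ℕ) (h : w + 1 < k) (h' : w' + 1 < k),
      col s(f ⟨w, Nat.lt_of_succ_lt h⟩, f ⟨w + 1, h⟩) =
        col s(f ⟨w', Nat.lt_of_succ_lt h'⟩, f ⟨w' + 1, h'⟩) → w = w') :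
    HasRainbowCopy G col (pathGraph k) := by
  refine ⟨pathSubgraph G f hf, ⟨pathSubgraphIso f hf⟩, ?_⟩
  intro e he e' he' hcol
  induction e using Sym2.inductionOn with | hf a b =>
  induction e' using Sym2.inductionOn with | hf a' b' =>
  rw [Subgraph.mem_edgeSet, pathSubgraph_adj] at he he'
  obtain ⟨w, hw, hew⟩ := pathRel_eq_edge he
  obtain ⟨w', hw', hew'⟩ := pathRel_eq_edge he'
  rw [hew, hew']
  rw [hew, hew'] at hcol
  have := hr w w' hw hw' hcol
  subst this
  rfl

end RainbowAux

namespace RainbowAux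

variable {V : Type*} {β : Type*}

lemma exists_repeat {k : ℕ} {G : SimpleGraph V} {col : Sym2 V → β}
    (hp : IsProperEdgeColoring G col) (hnr : ¬ HasRainbowCopy G col (pathGraph k))
    {f : Fin k → V} (hf : IsPathSeq G f) :
    ∃ p q : ℕ, ∃ (hp2 : p + 1 < k) (hq2 : q + 1 < k), p + 2 ≤ q ∧
      col s(f ⟨p, Nat.lt_of_succ_lt hp2⟩, f ⟨p + 1, hp2⟩) =
        col s(f ⟨q, Nat.lt_of_succ_lt hq2⟩, f ⟨q + 1, hq2⟩) := by
  by_contra hcon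
  push_neg at hcon
  apply hnr
  apply hasRainbowCopy_of_rainbow_seq hf
  intro w w' h h' hcol
  by_contra hne
  -- first, adjacent or equal indices are impossible; nonadjacent contradicts hcon
  rcases lt_trichotomy w w' with hlt | heq | hgt
  · rcases Nat.lt_or_ge w' (w + 2) with hadj | hfar
    · -- w' = w + 1 : adjacent edges, proper coloring forbids equal colors
      have hw' : w' = w + 1 := by omega
      subst hw'
      have hne2 : s(f ⟨w, Nat.lt_of_succ_lt h⟩, f ⟨w + 1, h⟩) ≠
          s(f ⟨w + 1, Nat.lt_of_succ_lt h'⟩, f ⟨w + 1 + 1, h'⟩) := by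
        intro hE
        rcases Sym2.eq_iff.mp hE with ⟨h1, _⟩ | ⟨h1, _⟩
        · have := hf.1 h1; simp only [Fin.mk.injEq] at this; omega
        · have := hf.1 h1; simp only [Fin.mk.injEq] at this; omega
      have hshare : ∃ v, v ∈ s(f ⟨w, Nat.lt_of_succ_lt h⟩, f ⟨w + 1, h⟩) ∧
          v ∈ s(f ⟨w + 1, Nat.lt_of_succ_lt h'⟩, f ⟨w + 1 + 1, h'⟩) := by
        refine ⟨f ⟨w + 1, h⟩, by simp, ?_⟩
        have : (⟨w + 1, h⟩ : Fin k) = ⟨w + 1, Nat.lt_of_succ_lt h'⟩ := rfl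
        rw [this]; simp
      exact hp _ ((G.mem_edgeSet).mpr (hf.2 w h)) _ ((G.mem_edgeSet).mpr (hf.2 (w+1) h'))
        hne2 hshare hcol
    · exact hcon w w' h h' (by omega) hcol
  · exact hne heq
  · rcases Nat.lt_or_ge w (w' + 2) with hadj | hfar
    · have hw : w = w' + 1 := by omega
      subst hw
      have hne2 : s(f ⟨w', Nat.lt_of_succ_lt h'⟩, f ⟨w' + 1, h'⟩) ≠
          s(f ⟨w' + 1, Nat.lt_of_succ_lt h⟩, f ⟨w' + 1 + 1, h⟩) := by
        intro hE
        rcases Sym2.eq_iff.mp hE with ⟨h1, _⟩ | ⟨h1, _⟩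
        · have := hf.1 h1; simp only [Fin.mk.injEq] at this; omega
        · have := hf.1 h1; simp only [Fin.mk.injEq] at this; omega
      have hshare : ∃ v, v ∈ s(f ⟨w', Nat.lt_of_succ_lt h'⟩, f ⟨w' + 1, h'⟩) ∧
          v ∈ s(f ⟨w' + 1, Nat.lt_of_succ_lt h⟩, f ⟨w' + 1 + 1, h⟩) := by
        refine ⟨f ⟨w' + 1, h'⟩, by simp, ?_⟩
        have : (⟨w' + 1, h'⟩ : Fin k) = ⟨w' + 1, Nat.lt_of_succ_lt h⟩ := rfl
        rw [this]; simp
      exact hp _ ((G.mem_edgeSet).mpr (hf.2 w' h')) _ ((G.mem_edgeSet).mpr (hf.2 (w'+1) h))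
        hne2 hshare hcol.symm
    · exact hcon w' w h' h (by omega) hcol.symm

end RainbowAux

namespace RainbowAux

variable {V : Type*} {β : Type*}

lemma sigma_lt {k i j : ℕ}
    (H : (k % 2 = 0 ∧ i = k) ∨ (k % 2 = 1 ∧ i % 2 = 0 ∧ i + 2 < k))
    (hj : j < k / 2) : (if 2 * j < i then 2 * j else 2 * j + 1) + 1 < k := by
  split_ifs <;> omega

lemma sigma_cover {k i l : ℕ}
    (H : (k % 2 = 0 ∧ i = k) ∨ (k % 2 = 1 ∧ i % 2 = 0 ∧ i + 2 < k))
    (hl : l < k) (hne : l ≠ i) :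
    ∃ j, j < k / 2 ∧ (l = (if 2 * j < i then 2 * j else 2 * j + 1) ∨
      l = (if 2 * j < i then 2 * j else 2 * j + 1) + 1) := by
  rcases Nat.lt_or_ge l i with hlt | hgt
  · exact ⟨l / 2, by split_ifs <;> omega⟩
  · exact ⟨(l - 1) / 2, by split_ifs <;> omega⟩

lemma card_pathSeq_le (k : ℕ) (hk : 5 ≤ k) (G : SimpleGraph V) [Fintype V]
    [DecidableEq V] [DecidableRel G.Adj] (col : Sym2 V → β)
    (hp : IsProperEdgeColoring G col)
    (hnr : ¬ HasRainbowCopy G col (pathGraph k)) :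
    Nat.card {f : Fin k → V // IsPathSeq G f} ≤
      k * k * (Fintype.card G.Dart) ^ (k / 2) := by
  classical
  have hk0 : 0 < k := by omega
  choose p q hp2 hq2 hle hcol using
    (fun x : {f : Fin k → V // IsPathSeq G f} => exists_repeat hp hnr x.2)
  set i : {f : Fin k → V // IsPathSeq G f} → ℕ := fun x =>
    if k % 2 = 0 then k else (if (p x) % 2 = 0 then p x else p x + 1) with hidef
  have hH : ∀ x, (k % 2 = 0 ∧ i x = k) ∨ (k % 2 = 1 ∧ (i x) % 2 = 0 ∧ i x + 2 < k) := by
    intro x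
    have h1 := hp2 x; have h2 := hq2 x; have h3 := hle x
    simp only [hidef]
    split_ifs <;> omega
  set t := k / 2 with htdef
  -- total extension of a path sequence
  set E : {f : Fin k → V // IsPathSeq G f} → ℕ → V := fun x l =>
    if h : l < k then x.1 ⟨l, h⟩ else x.1 ⟨0, hk0⟩ with hEdef
  have hE : ∀ x (l : ℕ) (h : l < k), E x l = x.1 ⟨l, h⟩ := by
    intro x l h; simp only [hEdef]; rw [dif_pos h]
  have hEadj : ∀ x (l : ℕ), l + 1 < k → G.Adj (E x l) (E x (l + 1)) := by
    intro x l h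
    rw [hE x l (Nat.lt_of_succ_lt h), hE x (l + 1) h]
    exact x.2.2 l h
  have hEcol : ∀ x, col s(E x (p x), E x (p x + 1)) = col s(E x (q x), E x (q x + 1)) := by
    intro x
    rw [hE x (p x) (Nat.lt_of_succ_lt (hp2 x)), hE x (p x + 1) (hp2 x),
      hE x (q x) (Nat.lt_of_succ_lt (hq2 x)), hE x (q x + 1) (hq2 x)]
    exact hcol x
  set F : {f : Fin k → V // IsPathSeq G f} → Fin k × Fin k × (Fin t → G.Dart) :=
    fun x =>
      ⟨⟨p x, by have := hp2 x; omega⟩, ⟨q x, by have := hq2 x; omega⟩,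
        fun j => ⟨(E x (if 2 * j.val < i x then 2 * j.val else 2 * j.val + 1),
                   E x ((if 2 * j.val < i x then 2 * j.val else 2 * j.val + 1) + 1)),
          hEadj x _ (sigma_lt (hH x) j.2)⟩⟩ with hFdef
  have hFinj : Function.Injective F := by
    intro x y hxy
    rw [hFdef] at hxy
    simp only [Prod.mk.injEq, Fin.mk.injEq] at hxy
    obtain ⟨hpq, hqq, hdart⟩ := hxy
    have hii : i x = i y := by simp only [hidef]; rw [hpq]
    have hagree : ∀ (l : ℕ), l < k → l ≠ i x → E x l = E y l := by
      intro l hl hli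
      obtain ⟨j, hj, hcase⟩ := sigma_cover (hH x) hl hli
      have hdj := congrFun hdart ⟨j, hj⟩
      have hd1 := congrArg (fun d => d.toProd.1) hdj
      have hd2 := congrArg (fun d => d.toProd.2) hdj
      simp only at hd1 hd2
      rw [← hii] at hd1 hd2
      rcases hcase with rfl | rfl
      · exact hd1
      · exact hd2
    have hkey : ∀ (l : ℕ), l < k → E x l = E y l := by
      intro l hl
      rcases eq_or_ne l (i x) with rfl | hli
      swap
      · exact hagree l hl hli
      -- the deleted index
      rcases hH x with ⟨hk2, hik⟩ | ⟨hk2, hie, hik⟩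
      · omega
      have hpx2 := hp2 x; have hqx2 := hq2 x; have hlex := hle x
      have hiple : i x ≤ p x + 1 := by simp only [hidef]; split_ifs <;> omega
      have hcx := hEcol x
      have hcy := hEcol y
      rw [← hpq, ← hqq] at hcy
      have eq1 : E x (q x) = E y (q x) := hagree _ (by omega) (by omega)
      have eq2 : E x (q x + 1) = E y (q x + 1) := hagree _ hqx2 (by omega)
      rcases Nat.even_or_odd (p x) with hpe | hpo
      · -- i x = p x
        rw [Nat.even_iff] at hpe
        have hip : i x = p x := by simp only [hidef]; split_ifs <;> omega
        have e1 : E x (p x + 1) = E y (p x + 1) := hagree _ hpx2 (by omega)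
        have hcc : col s(E x (p x + 1), E x (p x)) = col s(E x (p x + 1), E y (p x)) := by
          rw [Sym2.eq_swap, hcx, eq1, eq2, hcy.symm, e1, Sym2.eq_swap]
        have := proper_unique hp (hEadj x (p x) hpx2).symm
          (e1 ▸ (hEadj y (p x) hpx2).symm) hcc
        rw [hip]
        exact this
      · -- i x = p x + 1
        rw [Nat.odd_iff] at hpo
        have hip : i x = p x + 1 := by simp only [hidef]; split_ifs <;> omega
        have e1 : E x (p x) = E y (p x) := hagree _ (Nat.lt_of_succ_lt hpx2) (by omega)
        have hcc : col s(E x (p x), E x (p x + 1)) = col s(E x (p x), E y (p x + 1)) := by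
          rw [hcx, eq1, eq2, hcy.symm, e1]
        have := proper_unique hp (hEadj x (p x) hpx2)
          (e1 ▸ (hEadj y (p x) hpx2)) hcc
        rw [hip]
        exact this
    apply Subtype.ext
    funext l
    have hx' : x.1 l = E x l.val := by
      rw [hE x l.val l.isLt]
    have hy' : y.1 l = E y l.val := by
      rw [hE y l.val l.isLt]
    rw [hx', hy', hkey l.val l.isLt]
  calc Nat.card {f : Fin k → V // IsPathSeq G f}
      ≤ Nat.card (Fin k × Fin k × (Fin t → G.Dart)) :=
        Nat.card_le_card_of_injective F hFinj
    _ = k * k * (Fintype.card G.Dart) ^ t := by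
        simp only [Nat.card_eq_fintype_card, Fintype.card_prod, Fintype.card_fun,
          Fintype.card_fin]
        ring
    _ = k * k * (Fintype.card G.Dart) ^ (k / 2) := by rw [htdef]

end RainbowAux

namespace RainbowAux

variable {V : Type*} {β : Type*}

section EdgeBound

variable [Fintype V] [DecidableEq V] (G : SimpleGraph V) [DecidableRel G.Adj]

/-- Edges of `G` with both endpoints inside `W`. -/
def edgesIn (W : Finset V) : Finset (Sym2 V) :=
  G.edgeFinset.filter (fun e => ∀ x ∈ e, x ∈ W)

lemma edgesIn_univ : edgesIn G Finset.univ = G.edgeFinset := by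
  simp [edgesIn]

lemma edgesIn_erase_bound (W : Finset V) (v : V) :
    (edgesIn G W).card ≤ (edgesIn G (W.erase v)).card +
      (W ∩ G.neighborFinset v).card := by
  classical
  have hsub : edgesIn G W ⊆ edgesIn G (W.erase v) ∪
      (W ∩ G.neighborFinset v).image (fun w => s(v, w)) := by
    intro e he
    simp only [edgesIn, Finset.mem_filter] at he
    obtain ⟨heE, hev⟩ := he
    by_cases hvin : v ∈ e
    · refine Finset.mem_union_right _ ?_
      induction e using Sym2.inductionOn with | hf a b =>
      have hadj : G.Adj a b := by rwa [SimpleGraph.mem_edgeFinset, G.mem_edgeSet] at heE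
      rcases Sym2.mem_iff.mp hvin with rfl | rfl
      · refine Finset.mem_image.mpr ⟨b, ?_, rfl⟩
        refine Finset.mem_inter.mpr ⟨hev b (by simp), ?_⟩
        rwa [SimpleGraph.mem_neighborFinset]
      · refine Finset.mem_image.mpr ⟨a, ?_, ?_⟩
        · refine Finset.mem_inter.mpr ⟨hev a (by simp), ?_⟩
          rw [SimpleGraph.mem_neighborFinset]
          exact hadj.symm
        · exact Sym2.eq_swap
    · refine Finset.mem_union_left _ ?_
      simp only [edgesIn, Finset.mem_filter]
      refine ⟨heE, fun x hx => ?_⟩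
      refine Finset.mem_erase.mpr ⟨?_, hev x hx⟩
      rintro rfl
      exact hvin hx
  calc (edgesIn G W).card ≤ _ := Finset.card_le_card hsub
    _ ≤ (edgesIn G (W.erase v)).card +
        ((W ∩ G.neighborFinset v).image (fun w => s(v, w))).card :=
      Finset.card_union_le _ _
    _ ≤ _ := by gcongr; exact Finset.card_image_le

lemma exists_min_degree_subset (d : ℕ) :
    ∀ W : Finset V, d * W.card < (edgesIn G W).card →
      ∃ W', W' ⊆ W ∧ W'.Nonempty ∧
        ∀ v ∈ W', d + 1 ≤ (W' ∩ G.neighborFinset v).card := by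
  classical
  intro W
  induction W using Finset.strongInduction with
  | _ W ih =>
    intro hW
    by_cases hall : ∀ v ∈ W, d + 1 ≤ (W ∩ G.neighborFinset v).card
    · refine ⟨W, Finset.Subset.refl _, ?_, hall⟩
      rcases Finset.eq_empty_or_nonempty W with rfl | hne
      · exfalso
        have : edgesIn G (∅ : Finset V) = ∅ := by
          rw [Finset.eq_empty_iff_forall_notMem]
          intro e he
          simp only [edgesIn, Finset.mem_filter] at he
          induction e using Sym2.inductionOn with | hf a b =>
          exact absurd (he.2 a (by simp)) (by simp)
        rw [this] at hW
        simp at hW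
      · exact hne
    · push_neg at hall
      obtain ⟨v, hv, hdeg⟩ := hall
      have hWcard : 1 ≤ W.card := Finset.card_pos.mpr ⟨v, hv⟩
      have hkey := edgesIn_erase_bound G W v
      have hrec : d * (W.erase v).card < (edgesIn G (W.erase v)).card := by
        rw [Finset.card_erase_of_mem hv]
        have hmul : d * W.card = d * (W.card - 1) + d := by
          conv_lhs => rw [show W.card = (W.card - 1) + 1 by omega]
          ring
        omega
      obtain ⟨W', hW1, hW2, hW3⟩ := ih (W.erase v) (Finset.erase_ssubset hv) hrec
      exact ⟨W', hW1.trans (Finset.erase_subset _ _), hW2, hW3⟩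

end EdgeBound

end RainbowAux

namespace RainbowAux

variable {V : Type*} {β : Type*}

section Greedy

variable [Fintype V] [DecidableEq V] {G : SimpleGraph V} [DecidableRel G.Adj]

lemma exists_rainbow_seq {col : Sym2 V → β} (hp : IsProperEdgeColoring G col)
    (k : ℕ) (hk1 : 1 ≤ k) (W : Finset V) (hW : W.Nonempty)
    (hmin : ∀ v ∈ W, 2 * k ≤ (W ∩ G.neighborFinset v).card) :
    ∃ g : ℕ → V,
      (∀ a b, a < k → b < k → g a = g b → a = b) ∧
      (∀ a, a + 1 < k → G.Adj (g a) (g (a + 1))) ∧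
      (∀ a b, a + 1 < k → b + 1 < k →
        col s(g a, g (a + 1)) = col s(g b, g (b + 1)) → a = b) := by
  classical
  obtain ⟨v0, hv0⟩ := hW
  have main : ∀ j, j ≤ k → ∃ g : ℕ → V,
      (∀ a, a < j → g a ∈ W) ∧
      (∀ a b, a < j → b < j → g a = g b → a = b) ∧
      (∀ a, a + 1 < j → G.Adj (g a) (g (a + 1))) ∧
      (∀ a b, a + 1 < j → b + 1 < j →
        col s(g a, g (a + 1)) = col s(g b, g (b + 1)) → a = b) := by
    intro j
    induction j with
    | zero =>
      exact fun _ => ⟨fun _ => v0, fun a ha => by omega, fun a b ha => by omega,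
        fun a ha => by omega, fun a b ha => by omega⟩
    | succ j ihj =>
      intro hjk
      rcases Nat.eq_zero_or_pos j with rfl | hj1
      · refine ⟨fun _ => v0, fun a _ => hv0, fun a b ha hb _ => by omega,
          fun a ha => by omega, fun a b ha => by omega⟩
      obtain ⟨g, hgW, hginj, hgadj, hgcol⟩ := ihj (by omega)
      set u := g (j - 1) with hudef
      have huW : u ∈ W := hgW (j - 1) (by omega)
      set B1 : Finset V := (Finset.range j).image g with hB1def
      set B2 : Finset V := (W ∩ G.neighborFinset u).filter
        (fun w => ∃ a, a + 1 < j ∧ col s(u, w) = col s(g a, g (a + 1))) with hB2def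
      have hB1card : B1.card ≤ j := by
        calc B1.card ≤ (Finset.range j).card := Finset.card_image_le
          _ = j := Finset.card_range j
      have hB2card : B2.card ≤ j := by
        have hex : ∀ w ∈ B2, ∃ a, a + 1 < j ∧
            col s(u, w) = col s(g a, g (a + 1)) :=
          fun w hw => (Finset.mem_filter.mp hw).2
        choose aF haF1 haF2 using hex
        have hle : B2.card ≤ (Finset.range j).card := by
          apply Finset.card_le_card_of_injOn
            (fun w => if h : w ∈ B2 then aF w h else 0)
          · intro w hw
            have hw2 : w ∈ B2 := hw
            simp only [dif_pos hw2]
            exact Finset.mem_range.mpr (by have := haF1 w hw2; omega)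
          · intro w hw w' hw' hFF
            have hw2 : w ∈ B2 := hw
            have hw'2 : w' ∈ B2 := hw'
            simp only at hFF
            rw [dif_pos hw2, dif_pos hw'2] at hFF
            have hcc : col s(u, w) = col s(u, w') := by
              rw [haF2 w hw2, haF2 w' hw'2, hFF]
            have hadjw : G.Adj u w := by
              have hh := (Finset.mem_filter.mp hw2).1
              rw [Finset.mem_inter, SimpleGraph.mem_neighborFinset] at hh
              exact hh.2
            have hadjw' : G.Adj u w' := by
              have hh := (Finset.mem_filter.mp hw'2).1
              rw [Finset.mem_inter, SimpleGraph.mem_neighborFinset] at hh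
              exact hh.2
            exact proper_unique hp hadjw hadjw' hcc
        simpa using hle
      have havail := hmin u huW
      have hgood : ((W ∩ G.neighborFinset u) \ (B1 ∪ B2)).Nonempty := by
        rw [← Finset.card_pos]
        have hBcard : (B1 ∪ B2).card ≤ 2 * j := by
          calc (B1 ∪ B2).card ≤ B1.card + B2.card := Finset.card_union_le _ _
            _ ≤ 2 * j := by omega
        have hsd := Finset.le_card_sdiff (B1 ∪ B2) (W ∩ G.neighborFinset u)
        omega
      obtain ⟨w, hwmem⟩ := hgood
      rw [Finset.mem_sdiff] at hwmem
      obtain ⟨hwin, hwnot⟩ := hwmem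
      rw [Finset.mem_inter, SimpleGraph.mem_neighborFinset] at hwin
      obtain ⟨hwW, hwadj⟩ := hwin
      rw [Finset.mem_union] at hwnot
      push_neg at hwnot
      obtain ⟨hwB1, hwB2⟩ := hwnot
      have hwnew : ∀ a, a < j → g a ≠ w := by
        intro a ha hEq
        exact hwB1 (Finset.mem_image.mpr ⟨a, Finset.mem_range.mpr ha, hEq⟩)
      have hwcol : ¬∃ a, a + 1 < j ∧ col s(u, w) = col s(g a, g (a + 1)) := by
        intro hex
        apply hwB2
        rw [hB2def, Finset.mem_filter]
        exact ⟨Finset.mem_inter.mpr ⟨hwW, (SimpleGraph.mem_neighborFinset _ _ _).mpr hwadj⟩, hex⟩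
      set g' : ℕ → V := Function.update g j w with hg'def
      have hg'j : g' j = w := Function.update_self _ _ _
      have hg'ne : ∀ c, c ≠ j → g' c = g c := fun c hc => Function.update_of_ne hc _ _
      refine ⟨g', ?_, ?_, ?_, ?_⟩
      · intro a ha
        rcases Nat.lt_or_ge a j with h | h
        · rw [hg'ne a (by omega)]
          exact hgW a h
        · rw [show a = j by omega, hg'j]
          exact hwW
      · intro a b ha hb hEq
        rcases Nat.lt_or_ge a j with h1 | h1 <;> rcases Nat.lt_or_ge b j with h2 | h2
        · rw [hg'ne a (by omega), hg'ne b (by omega)] at hEq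
          exact hginj a b h1 h2 hEq
        · rw [hg'ne a (by omega), show b = j by omega, hg'j] at hEq
          exact absurd hEq (hwnew a h1)
        · rw [hg'ne b (by omega), show a = j by omega, hg'j] at hEq
          exact absurd hEq.symm (hwnew b h2)
        · omega
      · intro a ha
        rcases Nat.lt_or_ge (a + 1) j with h | h
        · rw [hg'ne a (by omega), hg'ne (a + 1) (by omega)]
          exact hgadj a h
        · have haj : a + 1 = j := by omega
          rw [hg'ne a (by omega), haj, hg'j, show a = j - 1 by omega]
          exact hwadj
      · intro a b ha hb hcc
        rcases Nat.lt_or_ge (a + 1) j with h1 | h1 <;>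
          rcases Nat.lt_or_ge (b + 1) j with h2 | h2
        · rw [hg'ne a (by omega), hg'ne (a + 1) (by omega),
            hg'ne b (by omega), hg'ne (b + 1) (by omega)] at hcc
          exact hgcol a b h1 h2 hcc
        · rw [hg'ne a (by omega), hg'ne (a + 1) (by omega), hg'ne b (by omega),
            show b + 1 = j by omega, hg'j, show b = j - 1 by omega] at hcc
          exact absurd ⟨a, h1, hcc.symm⟩ hwcol
        · rw [hg'ne b (by omega), hg'ne (b + 1) (by omega), hg'ne a (by omega),
            show a + 1 = j by omega, hg'j, show a = j - 1 by omega] at hcc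
          exact absurd ⟨b, h2, hcc⟩ hwcol
        · omega
  obtain ⟨g, _, h2, h3, h4⟩ := main k le_rfl
  exact ⟨g, h2, h3, h4⟩

lemma edge_bound {col : Sym2 V → β} (k : ℕ) (hk : 5 ≤ k)
    (hp : IsProperEdgeColoring G col)
    (hnr : ¬ HasRainbowCopy G col (pathGraph k)) :
    G.edgeFinset.card ≤ 2 * k * Fintype.card V := by
  classical
  by_contra hcon
  push_neg at hcon
  have hstart : 2 * k * (Finset.univ : Finset V).card < (edgesIn G Finset.univ).card := by
    rw [edgesIn_univ, Finset.card_univ]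
    exact hcon
  obtain ⟨W, _, hWne, hWmin⟩ := exists_min_degree_subset G (2 * k) Finset.univ hstart
  have hmin' : ∀ v ∈ W, 2 * k ≤ (W ∩ G.neighborFinset v).card :=
    fun v hv => le_trans (by omega) (hWmin v hv)
  obtain ⟨g, hinj, hadj, hcolinj⟩ := exists_rainbow_seq hp k (by omega) W hWne hmin'
  set f : Fin k → V := fun i => g i.val with hfdef
  have hf : IsPathSeq G f := by
    constructor
    · intro a b hab
      exact Fin.ext (hinj a.val b.val a.isLt b.isLt hab)
    · intro j h
      exact hadj j h
  exact hnr (hasRainbowCopy_of_rainbow_seq hf (fun w w' h h' hc => hcolinj w w' h h' hc))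

end Greedy

end RainbowAux

/-- Upper bound of Theorem 1.1: ex(n, P_k, rainbow-P_k) = O(n^⌊k/2⌋). -/
theorem path_rainbow_upper (k : ℕ) (hk : 5 ≤ k) :
    ∃ C : ℝ, ∀ (n : ℕ) (G : SimpleGraph (Fin n)) (β : Type*) (col : Sym2 (Fin n) → β),
      IsProperEdgeColoring G col → ¬ HasRainbowCopy G col (pathGraph k) →
      (_root_.copyCount G (pathGraph k) : ℝ) ≤ C * (n : ℝ) ^ (k / 2) := by
  classical
  refine ⟨((k * k * (4 * k) ^ k : ℕ) : ℝ), ?_⟩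
  intro n G β col hp hnr
  have hnat : _root_.copyCount G (pathGraph k) ≤ k * k * (4 * k) ^ k * n ^ (k / 2) := by
    have h1 := RainbowAux.copyCount_le_card_pathSeq k G
    have h2 := RainbowAux.card_pathSeq_le k hk G col hp hnr
    have h3 : Fintype.card G.Dart = 2 * G.edgeFinset.card :=
      G.dart_card_eq_twice_card_edges
    have h4 : G.edgeFinset.card ≤ 2 * k * n := by
      have := RainbowAux.edge_bound k hk hp hnr
      simpa using this
    have h5 : Fintype.card G.Dart ≤ 4 * k * n := by
      rw [h3]
      calc 2 * G.edgeFinset.card ≤ 2 * (2 * k * n) := by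
            exact Nat.mul_le_mul_left 2 h4
        _ = 4 * k * n := by ring
    calc _root_.copyCount G (pathGraph k)
        ≤ Nat.card {f : Fin k → Fin n // RainbowAux.IsPathSeq G f} := h1
      _ ≤ k * k * (Fintype.card G.Dart) ^ (k / 2) := h2
      _ ≤ k * k * (4 * k * n) ^ (k / 2) :=
          Nat.mul_le_mul_left _ (Nat.pow_le_pow_left h5 _)
      _ = k * k * ((4 * k) ^ (k / 2) * n ^ (k / 2)) := by rw [mul_pow]
      _ ≤ k * k * ((4 * k) ^ k * n ^ (k / 2)) :=
          Nat.mul_le_mul_left _ (Nat.mul_le_mul_right _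
            (Nat.pow_le_pow_right (by omega) (Nat.div_le_self _ _)))
      _ = k * k * (4 * k) ^ k * n ^ (k / 2) := by ring
  calc (_root_.copyCount G (pathGraph k) : ℝ)
      ≤ ((k * k * (4 * k) ^ k * n ^ (k / 2) : ℕ) : ℝ) := by exact_mod_cast hnat
    _ = ((k * k * (4 * k) ^ k : ℕ) : ℝ) * (n : ℝ) ^ (k / 2) := by push_cast; ring
end

section
/- For every positive integer n, the maximum number of copies of the path P_4 in a simple graph on n vertices that admits a proper edge-coloring with no rainbow copy of P_4 equals 12·⌊n/4⌋. (Exact value part of Proposition on P_4: ex(n, P_4, rainbow-P_4) = 12⌊n/4⌋.) -/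
open SimpleGraph

open Finset

namespace P4A
variable {n : ℕ}

/-- the adjacency pattern of the path a-b-c-d -/
def D (a b c d x y : Fin n) : Prop :=
  (x=a∧y=b)∨(x=b∧y=a)∨(x=b∧y=c)∨(x=c∧y=b)∨(x=c∧y=d)∨(x=d∧y=c)

def IsPT (G : SimpleGraph (Fin n)) (t : Fin n × Fin n × Fin n × Fin n) : Prop :=
  G.Adj t.1 t.2.1 ∧ G.Adj t.2.1 t.2.2.1 ∧ G.Adj t.2.2.1 t.2.2.2 ∧
  t.1 ≠ t.2.2.1 ∧ t.1 ≠ t.2.2.2 ∧ t.2.1 ≠ t.2.2.2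

noncomputable def pT (G : SimpleGraph (Fin n)) : Finset (Fin n × Fin n × Fin n × Fin n) :=
  @Finset.filter _ (IsPT G) (Classical.decPred _) Finset.univ

lemma mem_pT {G : SimpleGraph (Fin n)} {t} : t ∈ pT G ↔ IsPT G t := by
  simp [pT]

def pathSub (G : SimpleGraph (Fin n)) (a b c d : Fin n) (h : IsPT G (a,b,c,d)) :
    G.Subgraph where
  verts := {a,b,c,d}
  Adj x y := D a b c d x y
  adj_sub := by
    rintro x y (⟨rfl,rfl⟩|⟨rfl,rfl⟩|⟨rfl,rfl⟩|⟨rfl,rfl⟩|⟨rfl,rfl⟩|⟨rfl,rfl⟩) <;>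
      first
        | exact h.1 | exact h.1.symm | exact h.2.1 | exact h.2.1.symm
        | exact h.2.2.1 | exact h.2.2.1.symm
  edge_vert := by
    rintro x y (⟨rfl,_⟩|⟨rfl,_⟩|⟨rfl,_⟩|⟨rfl,_⟩|⟨rfl,_⟩|⟨rfl,_⟩) <;> simp
  symm := by
    exact ⟨fun x y hxy => by unfold D at *; tauto⟩

lemma pathSub_adj {G : SimpleGraph (Fin n)} {a b c d : Fin n} (h : IsPT G (a,b,c,d)) {x y} :
    (pathSub G a b c d h).Adj x y ↔ D a b c d x y := Iff.rfl

lemma pathSub_verts {G : SimpleGraph (Fin n)} {a b c d : Fin n} (h : IsPT G (a,b,c,d)) :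
    (pathSub G a b c d h).verts = {a,b,c,d} := rfl

lemma IsPT.ne12 {G : SimpleGraph (Fin n)} {a b c d} (h : IsPT G (a,b,c,d)) : a ≠ b := h.1.ne
lemma IsPT.ne23 {G : SimpleGraph (Fin n)} {a b c d} (h : IsPT G (a,b,c,d)) : b ≠ c := h.2.1.ne
lemma IsPT.ne34 {G : SimpleGraph (Fin n)} {a b c d} (h : IsPT G (a,b,c,d)) : c ≠ d := h.2.2.1.ne
lemma IsPT.ne13 {G : SimpleGraph (Fin n)} {a b c d} (h : IsPT G (a,b,c,d)) : a ≠ c := h.2.2.2.1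
lemma IsPT.ne14 {G : SimpleGraph (Fin n)} {a b c d} (h : IsPT G (a,b,c,d)) : a ≠ d := h.2.2.2.2.1
lemma IsPT.ne24 {G : SimpleGraph (Fin n)} {a b c d} (h : IsPT G (a,b,c,d)) : b ≠ d := h.2.2.2.2.2

noncomputable def pathIso0 {G : SimpleGraph (Fin n)} {a b c d : Fin n} (h : IsPT G (a,b,c,d)) :
    pathGraph 4 ≃g (pathSub G a b c d h).coe := by
  have h12 := h.ne12; have h23 := h.ne23; have h34 := h.ne34
  have h13 := h.ne13; have h14 := h.ne14; have h24 := h.ne24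
  refine ⟨Equiv.ofBijective
    (![⟨a, by rw [pathSub_verts]; simp⟩, ⟨b, by rw [pathSub_verts]; simp⟩,
       ⟨c, by rw [pathSub_verts]; simp⟩, ⟨d, by rw [pathSub_verts]; simp⟩] :
       Fin 4 → ↥(pathSub G a b c d h).verts) (show Function.Bijective _ from ⟨?_, ?_⟩), ?_⟩
  · intro i j hij
    fin_cases i <;> fin_cases j <;> simp_all [Subtype.ext_iff] <;> omega
  · rintro ⟨x, hx⟩
    rcases hx with rfl | rfl | rfl | rfl
    · exact ⟨0, rfl⟩
    · exact ⟨1, rfl⟩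
    · exact ⟨2, rfl⟩
    · exact ⟨3, rfl⟩
  · intro i j
    simp only [Equiv.ofBijective_apply, Subgraph.coe_adj]
    fin_cases i <;> fin_cases j <;>
      simp [pathSub_adj, D, pathGraph_adj, h12, h23, h34, h13, h14, h24,
        h12.symm, h23.symm, h34.symm, h13.symm, h14.symm, h24.symm] <;> decide


lemma IsPT.rev {G : SimpleGraph (Fin n)} {a b c d} (h : IsPT G (a,b,c,d)) :
    IsPT G (d,c,b,a) :=
  ⟨h.2.2.1.symm, h.2.1.symm, h.1.symm, h.ne24.symm, h.ne14.symm, h.ne13.symm⟩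

lemma pathSub_rev {G : SimpleGraph (Fin n)} {a b c d} (h : IsPT G (a,b,c,d)) :
    pathSub G d c b a h.rev = pathSub G a b c d h := by
  apply SimpleGraph.Subgraph.ext
  · show ({d,c,b,a} : Set (Fin n)) = {a,b,c,d}
    ext x; simp; tauto
  · ext x y; show D d c b a x y ↔ D a b c d x y
    unfold D; tauto

lemma exists_pt_of_iso {G : SimpleGraph (Fin n)} {A : G.Subgraph}
    (e : A.coe ≃g pathGraph 4) :
    ∃ a b c d, ∃ h : IsPT G (a,b,c,d), A = pathSub G a b c d h := by
  classical
  set f : Fin 4 → Fin n := fun i => ((e.symm i : A.verts) : Fin n) with hf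
  have hfv : ∀ i, f i ∈ A.verts := fun i => (e.symm i).2
  have key : ∀ i j, A.Adj (f i) (f j) ↔ (pathGraph 4).Adj i j := by
    intro i j
    rw [← SimpleGraph.Subgraph.coe_adj]
    exact e.symm.map_adj_iff
  have finj : Function.Injective f := fun i j hij => by
    apply e.symm.injective; exact Subtype.ext hij
  have fne : ∀ i j : Fin 4, i ≠ j → f i ≠ f j := fun i j hij => fun hc => hij (finj hc)
  have pg : ∀ i j : Fin 4, (i.val + 1 = j.val ∨ j.val + 1 = i.val) → (pathGraph 4).Adj i j :=
    fun i j hij => (pathGraph_adj).mpr hij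
  refine ⟨f 0, f 1, f 2, f 3, ⟨A.adj_sub ((key 0 1).mpr (pg 0 1 (by decide))),
    A.adj_sub ((key 1 2).mpr (pg 1 2 (by decide))),
    A.adj_sub ((key 2 3).mpr (pg 2 3 (by decide))), fne 0 2 (by decide), fne 0 3 (by decide),
    fne 1 3 (by decide)⟩, ?_⟩
  apply SimpleGraph.Subgraph.ext
  · show A.verts = {f 0, f 1, f 2, f 3}
    ext x
    constructor
    · intro hx
      have : ∃ i, f i = x := ⟨e ⟨x, hx⟩, by simp [hf]⟩
      obtain ⟨i, rfl⟩ := this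
      fin_cases i <;> simp
    · rintro (rfl|rfl|rfl|rfl) <;> apply hfv
  · ext x y
    show A.Adj x y ↔ D (f 0) (f 1) (f 2) (f 3) x y
    constructor
    · intro hxy
      have hx : ∃ i, f i = x := ⟨e ⟨x, A.edge_vert hxy⟩, by simp [hf]⟩
      have hy : ∃ j, f j = y := ⟨e ⟨y, A.edge_vert hxy.symm⟩, by simp [hf]⟩
      obtain ⟨i, rfl⟩ := hx; obtain ⟨j, rfl⟩ := hy
      have hadj := (key i j).mp hxy
      rw [pathGraph_adj] at hadj
      unfold D
      fin_cases i <;> fin_cases j <;> simp_all <;> omega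
    · rintro (⟨rfl,rfl⟩|⟨rfl,rfl⟩|⟨rfl,rfl⟩|⟨rfl,rfl⟩|⟨rfl,rfl⟩|⟨rfl,rfl⟩) <;>
        [exact (key 0 1).mpr (pg 0 1 (by decide)); exact (key 1 0).mpr (pg 1 0 (by decide));
         exact (key 1 2).mpr (pg 1 2 (by decide)); exact (key 2 1).mpr (pg 2 1 (by decide));
         exact (key 2 3).mpr (pg 2 3 (by decide)); exact (key 3 2).mpr (pg 3 2 (by decide))]


lemma pathSub_fiber {G : SimpleGraph (Fin n)} {a b c d a' b' c' d' : Fin n}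
    (h : IsPT G (a,b,c,d)) (h' : IsPT G (a',b',c',d'))
    (heq : pathSub G a' b' c' d' h' = pathSub G a b c d h) :
    (a',b',c',d') = ((a,b,c,d) : Fin n × Fin n × Fin n × Fin n) ∨
      (a',b',c',d') = ((d,c,b,a) : Fin n × Fin n × Fin n × Fin n) := by
  have hadj : ∀ x y, D a' b' c' d' x y ↔ D a b c d x y := by
    intro x y
    constructor
    · intro hd; rw [← pathSub_adj h, ← heq]; exact hd
    · intro hd; rw [← pathSub_adj h', heq]; exact hd
  have h1 : D a b c d a' b' := (hadj a' b').mp (Or.inl ⟨rfl, rfl⟩)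
  have h2 : D a b c d b' c' := (hadj b' c').mp (Or.inr (Or.inr (Or.inl ⟨rfl, rfl⟩)))
  have h3 : D a b c d c' d' := (hadj c' d').mp (Or.inr (Or.inr (Or.inr (Or.inr (Or.inl ⟨rfl, rfl⟩)))))
  have e12 := h.ne12; have e23 := h.ne23; have e34 := h.ne34
  have e13 := h.ne13; have e14 := h.ne14; have e24 := h.ne24
  have f12 := h'.ne12; have f23 := h'.ne23; have f34 := h'.ne34
  have f13 := h'.ne13; have f14 := h'.ne14; have f24 := h'.ne24
  simp only [Prod.mk.injEq]
  unfold D at h1 h2 h3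
  rcases h1 with (⟨rfl,rfl⟩|⟨rfl,rfl⟩|⟨rfl,rfl⟩|⟨rfl,rfl⟩|⟨rfl,rfl⟩|⟨rfl,rfl⟩) <;>
    rcases h2 with (⟨h2a,h2b⟩|⟨h2a,h2b⟩|⟨h2a,h2b⟩|⟨h2a,h2b⟩|⟨h2a,h2b⟩|⟨h2a,h2b⟩) <;>
    rcases h3 with (⟨h3a,h3b⟩|⟨h3a,h3b⟩|⟨h3a,h3b⟩|⟨h3a,h3b⟩|⟨h3a,h3b⟩|⟨h3a,h3b⟩) <;>
    simp_all


open Classical in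
noncomputable def Phi (G : SimpleGraph (Fin n)) (t : Fin n × Fin n × Fin n × Fin n) :
    G.Subgraph :=
  if h : IsPT G t then pathSub G t.1 t.2.1 t.2.2.1 t.2.2.2 h else ⊥

lemma Phi_eq {G : SimpleGraph (Fin n)} {a b c d : Fin n} (h : IsPT G (a,b,c,d)) :
    Phi G (a,b,c,d) = pathSub G a b c d h := by
  simp only [Phi, dif_pos h]

lemma two_mul_copyCount (G : SimpleGraph (Fin n)) :
    2 * _root_.copyCount G (pathGraph 4) = (pT G).card := by
  classical
  have himg : {A : G.Subgraph | Nonempty (A.coe ≃g pathGraph 4)} =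
      ↑((pT G).image (Phi G)) := by
    ext A
    simp only [Set.mem_setOf_eq, Finset.coe_image, Set.mem_image, Finset.mem_coe]
    constructor
    · rintro ⟨e⟩
      obtain ⟨a,b,c,d,h,rfl⟩ := exists_pt_of_iso e
      exact ⟨(a,b,c,d), mem_pT.mpr h, Phi_eq h⟩
    · rintro ⟨⟨a,b,c,d⟩, ht, rfl⟩
      have h := mem_pT.mp ht
      rw [Phi_eq h]
      exact ⟨(pathIso0 h).symm⟩
  have hcard : (pT G).card =
      ∑ A ∈ (pT G).image (Phi G), ((pT G).filter (fun t => Phi G t = A)).card :=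
    Finset.card_eq_sum_card_fiberwise (fun t ht => Finset.mem_image_of_mem _ ht)
  have hfib : ∀ A ∈ (pT G).image (Phi G),
      ((pT G).filter (fun t => Phi G t = A)).card = 2 := by
    rintro A hA
    obtain ⟨⟨a,b,c,d⟩, ht, rfl⟩ := Finset.mem_image.mp hA
    have h := mem_pT.mp ht
    have hset : (pT G).filter (fun t' => Phi G t' = Phi G (a,b,c,d)) =
        {(a,b,c,d), (d,c,b,a)} := by
      ext t'
      simp only [Finset.mem_filter, Finset.mem_insert, Finset.mem_singleton]
      constructor
      · rintro ⟨ht', heq⟩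
        obtain ⟨a',b',c',d'⟩ := t'
        have h' := mem_pT.mp ht'
        rw [Phi_eq h', Phi_eq h] at heq
        exact pathSub_fiber h h' heq
      · rintro (rfl | rfl)
        · exact ⟨ht, rfl⟩
        · refine ⟨mem_pT.mpr h.rev, ?_⟩
          rw [Phi_eq h.rev, Phi_eq h]
          exact pathSub_rev h
    rw [hset, Finset.card_insert_of_notMem, Finset.card_singleton]
    simp only [Finset.mem_singleton]
    intro hc
    exact h.ne14 (congrArg Prod.fst hc)
  rw [_root_.copyCount, himg, Set.ncard_coe_finset, hcard, Finset.sum_congr rfl hfib,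
    Finset.sum_const, smul_eq_mul, mul_comm]


/-! ### The construction: disjoint copies of K₄ -/

def G0 (n : ℕ) : SimpleGraph (Fin n) where
  Adj x y := x ≠ y ∧ x.val / 4 = y.val / 4 ∧ x.val < 4 * (n / 4) ∧ y.val < 4 * (n / 4)
  symm := ⟨by rintro x y ⟨h1,h2,h3,h4⟩; exact ⟨h1.symm, h2.symm, h4, h3⟩⟩
  loopless := ⟨fun x h => h.1 rfl⟩

def col0 (n : ℕ) : Sym2 (Fin n) → ℕ :=
  Sym2.lift ⟨fun x y => x.val % 4 ^^^ y.val % 4, fun x y => Nat.xor_comm _ _⟩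

lemma xor_left_cancel {a b c : ℕ} (h : a ^^^ b = a ^^^ c) : b = c := by
  have := congrArg (fun t => a ^^^ t) h
  simpa [← Nat.xor_assoc] using this

lemma xor4 (p q r t : Fin 4) (h1 : p ≠ q) (h2 : p ≠ r) (h3 : p ≠ t)
    (h4 : q ≠ r) (h5 : q ≠ t) (h6 : r ≠ t) : p.val ^^^ q.val = r.val ^^^ t.val := by
  fin_cases p <;> fin_cases q <;> fin_cases r <;> fin_cases t <;>
    first
      | decide
      | exact absurd rfl h1 | exact absurd rfl h2 | exact absurd rfl h3
      | exact absurd rfl h4 | exact absurd rfl h5 | exact absurd rfl h6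

lemma proper0 (n : ℕ) : IsProperEdgeColoring (G0 n) (col0 n) := by
  rintro e1 he1 e2 he2 hne hshare
  induction' e1 using Sym2.ind with x y
  induction' e2 using Sym2.ind with z w
  obtain ⟨v, hv1, hv2⟩ := hshare
  rw [SimpleGraph.mem_edgeSet] at he1 he2
  obtain ⟨hxy, hbxy, hx4, hy4⟩ := he1
  obtain ⟨hzw, hbzw, hz4, hw4⟩ := he2
  rw [Sym2.mem_iff] at hv1 hv2
  simp only [col0, Sym2.lift_mk]
  intro hcol
  apply hne
  have hfe : ∀ p q : Fin n, p.val = q.val → p = q := fun p q hpq => Fin.ext hpq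
  rcases hv1 with rfl | rfl <;> rcases hv2 with rfl | rfl
  · -- v = x = z
    have : y.val % 4 = w.val % 4 := xor_left_cancel hcol
    have : y = w := hfe _ _ (by omega)
    subst this; rfl
  · -- v = x = w
    rw [Nat.xor_comm (z.val % 4)] at hcol
    have : y.val % 4 = z.val % 4 := xor_left_cancel hcol
    have : y = z := hfe _ _ (by omega)
    subst this; exact Sym2.eq_swap
  · -- v = y = z
    rw [Nat.xor_comm (x.val % 4)] at hcol
    have : x.val % 4 = w.val % 4 := xor_left_cancel hcol
    have : x = w := hfe _ _ (by omega)
    subst this; exact Sym2.eq_swap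
  · -- v = y = w
    rw [Nat.xor_comm (x.val % 4), Nat.xor_comm (z.val % 4)] at hcol
    have : x.val % 4 = z.val % 4 := xor_left_cancel hcol
    have : x = z := hfe _ _ (by omega)
    subst this; rfl

lemma norainbow0 (n : ℕ) : ¬ HasRainbowCopy (G0 n) (col0 n) (pathGraph 4) := by
  rintro ⟨A, ⟨e⟩, hinj⟩
  obtain ⟨a,b,c,d,h,rfl⟩ := exists_pt_of_iso e
  have h1 : s(a,b) ∈ (pathSub (G0 n) a b c d h).edgeSet :=
    SimpleGraph.Subgraph.mem_edgeSet.mpr (Or.inl ⟨rfl, rfl⟩)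
  have h2 : s(c,d) ∈ (pathSub (G0 n) a b c d h).edgeSet :=
    SimpleGraph.Subgraph.mem_edgeSet.mpr (Or.inr (Or.inr (Or.inr (Or.inr (Or.inl ⟨rfl, rfl⟩)))))
  have hadj1 : (G0 n).Adj a b := h.1
  have hadj2 : (G0 n).Adj b c := h.2.1
  have hadj3 : (G0 n).Adj c d := h.2.2.1
  obtain ⟨hab, hbab, -, -⟩ := hadj1
  obtain ⟨hbc, hbbc, -, -⟩ := hadj2
  obtain ⟨hcd, hbcd, -, -⟩ := hadj3
  have e13 := h.ne13; have e14 := h.ne14; have e24 := h.ne24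
  have hcol : col0 n s(a,b) = col0 n s(c,d) := by
    simp only [col0, Sym2.lift_mk]
    have ha : a.val % 4 < 4 := Nat.mod_lt _ (by norm_num)
    have hb : b.val % 4 < 4 := Nat.mod_lt _ (by norm_num)
    have hc : c.val % 4 < 4 := Nat.mod_lt _ (by norm_num)
    have hd : d.val % 4 < 4 := Nat.mod_lt _ (by norm_num)
    have nab : a.val % 4 ≠ b.val % 4 := by
      intro hx; exact hab (Fin.ext (by omega))
    have nac : a.val % 4 ≠ c.val % 4 := by
      intro hx; exact e13 (Fin.ext (by omega))
    have nad : a.val % 4 ≠ d.val % 4 := by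
      intro hx; exact e14 (Fin.ext (by omega))
    have nbc : b.val % 4 ≠ c.val % 4 := by
      intro hx; exact hbc (Fin.ext (by omega))
    have nbd : b.val % 4 ≠ d.val % 4 := by
      intro hx; exact e24 (Fin.ext (by omega))
    have ncd : c.val % 4 ≠ d.val % 4 := by
      intro hx; exact hcd (Fin.ext (by omega))
    exact xor4 ⟨_, ha⟩ ⟨_, hb⟩ ⟨_, hc⟩ ⟨_, hd⟩ (by simpa using nab) (by simpa using nac)
      (by simpa using nad) (by simpa using nbc) (by simpa using nbd) (by simpa using ncd)
  have := hinj h1 h2 hcol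
  rw [Sym2.eq_iff] at this
  rcases this with ⟨rfl, -⟩ | ⟨rfl, -⟩
  · exact e13 rfl
  · exact e14 rfl


def vtx (n : ℕ) (k : Fin (n/4)) (r : Fin 4) : Fin n :=
  ⟨4 * k.val + r.val, by have hk := k.isLt; have hr := r.isLt; omega⟩

lemma adj_vtx {n : ℕ} (k : Fin (n/4)) {r r' : Fin 4} (h : r ≠ r') :
    (G0 n).Adj (vtx n k r) (vtx n k r') := by
  have hk := k.isLt; have hr := r.isLt; have hr' := r'.isLt
  have hv : r.val ≠ r'.val := fun hc => h (Fin.ext hc)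
  exact ⟨fun hc => hv (by have := congrArg Fin.val hc; simp [vtx] at this; omega),
    by simp [vtx]; omega, by simp [vtx]; omega, by simp [vtx]; omega⟩

def Psi (n : ℕ) (p : Fin (n/4) × Equiv.Perm (Fin 4)) :
    Fin n × Fin n × Fin n × Fin n :=
  (vtx n p.1 (p.2 0), vtx n p.1 (p.2 1), vtx n p.1 (p.2 2), vtx n p.1 (p.2 3))

lemma vtx_ne {n : ℕ} (k : Fin (n/4)) {r r' : Fin 4} (h : r ≠ r') :
    vtx n k r ≠ vtx n k r' := (adj_vtx k h).1

lemma Psi_mem {n : ℕ} (p : Fin (n/4) × Equiv.Perm (Fin 4)) : Psi n p ∈ pT (G0 n) := by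
  refine mem_pT.mpr ⟨adj_vtx _ (p.2.injective.ne (by decide)),
    adj_vtx _ (p.2.injective.ne (by decide)), adj_vtx _ (p.2.injective.ne (by decide)),
    vtx_ne _ (p.2.injective.ne (by decide)), vtx_ne _ (p.2.injective.ne (by decide)),
    vtx_ne _ (p.2.injective.ne (by decide))⟩

lemma Psi_inj {n : ℕ} : Function.Injective (Psi n) := by
  rintro ⟨k, σ⟩ ⟨k', σ'⟩ h
  have e0 := congrArg (fun t => t.1.val) h
  have e1 := congrArg (fun t => t.2.1.val) h
  have e2 := congrArg (fun t => t.2.2.1.val) h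
  have e3 := congrArg (fun t => t.2.2.2.val) h
  simp only [Psi, vtx] at e0 e1 e2 e3
  have l0 := (σ 0).isLt; have l1 := (σ 1).isLt; have l2 := (σ 2).isLt
  have l3 := (σ 3).isLt
  have m0 := (σ' 0).isLt; have m1 := (σ' 1).isLt; have m2 := (σ' 2).isLt
  have m3 := (σ' 3).isLt
  have hk : k = k' := Fin.ext (by omega)
  subst hk
  have v0 : σ 0 = σ' 0 := Fin.ext (by omega)
  have v1 : σ 1 = σ' 1 := Fin.ext (by omega)
  have v2 : σ 2 = σ' 2 := Fin.ext (by omega)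
  have v3 : σ 3 = σ' 3 := Fin.ext (by omega)
  have hσ : σ = σ' := Equiv.ext fun i => by
    fin_cases i
    · exact v0
    · exact v1
    · exact v2
    · exact v3
  rw [hσ]

lemma Psi_surj {n : ℕ} {t} (ht : t ∈ pT (G0 n)) : ∃ p, Psi n p = t := by
  obtain ⟨a, b, c, d⟩ := t
  have h := mem_pT.mp ht
  have hadj1 : (G0 n).Adj a b := h.1
  have hadj2 : (G0 n).Adj b c := h.2.1
  have hadj3 : (G0 n).Adj c d := h.2.2.1
  obtain ⟨hab, hbab, ha4, hb4⟩ := hadj1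
  obtain ⟨hbc, hbbc, -, hc4⟩ := hadj2
  obtain ⟨hcd, hbcd, -, hd4⟩ := hadj3
  have e13 : a ≠ c := h.2.2.2.1
  have e14 : a ≠ d := h.2.2.2.2.1
  have e24 : b ≠ d := h.2.2.2.2.2
  have vne : ∀ p q : Fin n, p ≠ q → p.val ≠ q.val := fun p q hpq hc => hpq (Fin.ext hc)
  have nab := vne _ _ hab; have nbc := vne _ _ hbc; have ncd := vne _ _ hcd
  have nac := vne _ _ e13; have nad := vne _ _ e14; have nbd := vne _ _ e24
  have hm4 : ∀ x : ℕ, x % 4 < 4 := fun x => Nat.mod_lt _ (by norm_num)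
  have finj : Function.Injective
      (![⟨a.val % 4, hm4 _⟩, ⟨b.val % 4, hm4 _⟩, ⟨c.val % 4, hm4 _⟩, ⟨d.val % 4, hm4 _⟩] :
        Fin 4 → Fin 4) := by
    intro i j hij
    fin_cases i <;> fin_cases j <;> simp_all [Fin.ext_iff] <;> omega
  refine ⟨(⟨a.val / 4, by omega⟩,
    Equiv.ofBijective _ ((Finite.injective_iff_bijective).mp finj)), ?_⟩
  exact Prod.ext (Fin.ext (show 4 * (a.val / 4) + a.val % 4 = a.val by omega))
    (Prod.ext (Fin.ext (show 4 * (a.val / 4) + b.val % 4 = b.val by omega))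
      (Prod.ext (Fin.ext (show 4 * (a.val / 4) + c.val % 4 = c.val by omega))
        (Fin.ext (show 4 * (a.val / 4) + d.val % 4 = d.val by omega))))

lemma card_pT_G0 (n : ℕ) : (pT (G0 n)).card = 24 * (n / 4) := by
  classical
  have himg : pT (G0 n) = Finset.univ.image (Psi n) := by
    ext t
    simp only [Finset.mem_image, Finset.mem_univ, true_and]
    exact ⟨fun ht => Psi_surj ht, fun ⟨p, hp⟩ => hp ▸ Psi_mem p⟩
  rw [himg, Finset.card_image_of_injective _ Psi_inj, Finset.card_univ,
    Fintype.card_prod, Fintype.card_perm, Fintype.card_fin, Fintype.card_fin]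
  norm_num [Nat.factorial]
  ring

lemma copyCount_G0 (n : ℕ) : _root_.copyCount (G0 n) (pathGraph 4) = 12 * (n / 4) := by
  have h := two_mul_copyCount (G0 n)
  rw [card_pT_G0] at h
  omega


/-! ### Upper bound -/

section Upper
variable {G : SimpleGraph (Fin n)} {col : Sym2 (Fin n) → ℕ}

lemma pathSub_edgeSet {a b c d : Fin n} (h : IsPT G (a,b,c,d)) :
    (pathSub G a b c d h).edgeSet = {s(a,b), s(b,c), s(c,d)} := by
  ext e
  induction' e using Sym2.ind with x y
  rw [SimpleGraph.Subgraph.mem_edgeSet]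
  constructor
  · rintro (⟨rfl,rfl⟩|⟨rfl,rfl⟩|⟨rfl,rfl⟩|⟨rfl,rfl⟩|⟨rfl,rfl⟩|⟨rfl,rfl⟩)
    · exact Or.inl rfl
    · exact Or.inl (Sym2.eq_swap)
    · exact Or.inr (Or.inl rfl)
    · exact Or.inr (Or.inl (Sym2.eq_swap))
    · exact Or.inr (Or.inr rfl)
    · exact Or.inr (Or.inr (Sym2.eq_swap))
  · intro he
    simp only [Set.mem_insert_iff, Set.mem_singleton_iff, Sym2.eq_iff] at he
    rcases he with (⟨rfl, rfl⟩ | ⟨rfl, rfl⟩) | (⟨rfl, rfl⟩ | ⟨rfl, rfl⟩) | (⟨rfl, rfl⟩ | ⟨rfl, rfl⟩)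
    · exact Or.inl ⟨rfl, rfl⟩
    · exact Or.inr (Or.inl ⟨rfl, rfl⟩)
    · exact Or.inr (Or.inr (Or.inl ⟨rfl, rfl⟩))
    · exact Or.inr (Or.inr (Or.inr (Or.inl ⟨rfl, rfl⟩)))
    · exact Or.inr (Or.inr (Or.inr (Or.inr (Or.inl ⟨rfl, rfl⟩))))
    · exact Or.inr (Or.inr (Or.inr (Or.inr (Or.inr ⟨rfl, rfl⟩))))

lemma colEq (hp : IsProperEdgeColoring G col)
    (hnr : ¬ HasRainbowCopy G col (pathGraph 4))
    {a b c d : Fin n} (h : IsPT G (a,b,c,d)) : col s(a,b) = col s(c,d) := by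
  by_contra hne
  apply hnr
  refine ⟨pathSub G a b c d h, ⟨(pathIso0 h).symm⟩, ?_⟩
  have e12 := h.ne12; have e23 := h.ne23; have e34 := h.ne34
  have e13 := h.ne13; have e14 := h.ne14; have e24 := h.ne24
  have d12 : s(a,b) ≠ s(b,c) := by rw [Ne, Sym2.eq_iff]; tauto
  have d23 : s(b,c) ≠ s(c,d) := by rw [Ne, Sym2.eq_iff]; tauto
  have d13 : s(a,b) ≠ s(c,d) := by rw [Ne, Sym2.eq_iff]; tauto
  have c12 : col s(a,b) ≠ col s(b,c) :=
    hp _ ((SimpleGraph.mem_edgeSet _).mpr h.1) _ ((SimpleGraph.mem_edgeSet _).mpr h.2.1) d12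
      ⟨b, by simp, by simp⟩
  have c23 : col s(b,c) ≠ col s(c,d) :=
    hp _ ((SimpleGraph.mem_edgeSet _).mpr h.2.1) _ ((SimpleGraph.mem_edgeSet _).mpr h.2.2.1) d23
      ⟨c, by simp, by simp⟩
  rw [pathSub_edgeSet h]
  intro e1 he1 e2 he2 hcol
  rcases he1 with rfl | rfl | rfl <;> rcases he2 with rfl | rfl | rfl <;>
    first
      | rfl
      | exact absurd hcol c12 | exact absurd hcol.symm c12
      | exact absurd hcol c23 | exact absurd hcol.symm c23
      | exact absurd hcol hne | exact absurd hcol.symm hne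

lemma nbr_closed (hp : IsProperEdgeColoring G col)
    (hnr : ¬ HasRainbowCopy G col (pathGraph 4))
    {b x y z : Fin n} (hx : G.Adj b x) (hy : G.Adj b y) (hz : G.Adj b z)
    (hxy : x ≠ y) (hxz : x ≠ z) (hyz : y ≠ z) {w} (hw : G.Adj x w) :
    w = b ∨ w = y ∨ w = z := by
  by_contra hcon
  push_neg at hcon
  obtain ⟨hwb, hwy, hwz⟩ := hcon
  have t1 : IsPT G (y, b, x, w) :=
    ⟨hy.symm, hx, hw, hxy.symm, fun hc => hwy hc.symm, fun hc => hwb hc.symm⟩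
  have t2 : IsPT G (z, b, x, w) :=
    ⟨hz.symm, hx, hw, hxz.symm, fun hc => hwz hc.symm, fun hc => hwb hc.symm⟩
  have hc1 := colEq hp hnr t1
  have hc2 := colEq hp hnr t2
  have dyz : s(y,b) ≠ s(z,b) := by
    rw [Ne, Sym2.eq_iff]
    push_neg
    exact ⟨fun hc => absurd hc hyz, fun hc => absurd hc.symm hy.ne⟩
  exact hp _ ((SimpleGraph.mem_edgeSet _).mpr hy.symm) _ ((SimpleGraph.mem_edgeSet _).mpr hz.symm)
    dyz ⟨b, by simp, by simp⟩ (hc1.trans hc2.symm)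

lemma reach_closed {K : Set (Fin n)} (hcl : ∀ p ∈ K, ∀ w, G.Adj p w → w ∈ K)
    {b y : Fin n} (hb : b ∈ K) (h : G.Reachable b y) : y ∈ K := by
  have main : ∀ (u v : Fin n) (p : G.Walk u v), u ∈ K → v ∈ K := by
    intro u v p
    induction p with
    | nil => exact id
    | cons h p ih => exact fun hu => ih (hcl _ hu _ h)
  exact main b y h.some hb


noncomputable def Tc (G : SimpleGraph (Fin n)) (c : G.ConnectedComponent) :
    Finset (Fin n × Fin n × Fin n × Fin n) :=
  @Finset.filter _ (fun t => G.connectedComponentMk t.1 = c) (Classical.decPred _) (pT G)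

noncomputable def Sc (G : SimpleGraph (Fin n)) (c : G.ConnectedComponent) : Finset (Fin n) :=
  @Finset.filter _ (fun v => G.connectedComponentMk v = c) (Classical.decPred _) Finset.univ

lemma mem_Tc {G : SimpleGraph (Fin n)} {c : G.ConnectedComponent} {t} :
    t ∈ Tc G c ↔ IsPT G t ∧ G.connectedComponentMk t.1 = c := by
  simp [Tc, Finset.mem_filter, mem_pT]

lemma mem_Sc {G : SimpleGraph (Fin n)} {c : G.ConnectedComponent} {v} :
    v ∈ Sc G c ↔ G.connectedComponentMk v = c := by
  simp [Sc, Finset.mem_filter]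

lemma coord_mem_Sc {G : SimpleGraph (Fin n)} {c : G.ConnectedComponent} :
    ∀ t ∈ Tc G c, t.1 ∈ Sc G c ∧ t.2.1 ∈ Sc G c ∧ t.2.2.1 ∈ Sc G c ∧ t.2.2.2 ∈ Sc G c := by
  rintro ⟨a, b, c', d⟩ ht
  obtain ⟨h, hc1⟩ := mem_Tc.mp ht
  have m1 : G.connectedComponentMk a = c := hc1
  have m2 : G.connectedComponentMk b = c :=
    (SimpleGraph.ConnectedComponent.sound h.1.reachable).symm.trans m1
  have m3 : G.connectedComponentMk c' = c :=
    (SimpleGraph.ConnectedComponent.sound h.2.1.reachable).symm.trans m2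
  have m4 : G.connectedComponentMk d = c :=
    (SimpleGraph.ConnectedComponent.sound h.2.2.1.reachable).symm.trans m3
  exact ⟨mem_Sc.mpr m1, mem_Sc.mpr m2, mem_Sc.mpr m3, mem_Sc.mpr m4⟩

lemma comp_bound (hp : IsProperEdgeColoring G col)
    (hnr : ¬ HasRainbowCopy G col (pathGraph 4)) (c : G.ConnectedComponent) :
    (Tc G c).card ≤ 24 * ((Sc G c).card / 4) := by
  classical
  rcases Finset.eq_empty_or_nonempty (Tc G c) with hT | ⟨t0, ht0⟩
  · simp [hT]
  -- the component contains at least 4 vertices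
  have hk4 : 4 ≤ (Sc G c).card := by
    obtain ⟨a, b, c', d⟩ := t0
    obtain ⟨hmem1, hmem2, hmem3, hmem4⟩ := coord_mem_Sc _ ht0
    have h := (mem_Tc.mp ht0).1
    have hsub : ({a, b, c', d} : Finset (Fin n)) ⊆ Sc G c := by
      intro v hv
      simp only [Finset.mem_insert, Finset.mem_singleton] at hv
      rcases hv with rfl | rfl | rfl | rfl <;> assumption
    have hcard : ({a, b, c', d} : Finset (Fin n)).card = 4 := by
      rw [Finset.card_insert_of_notMem (by simp [h.ne12, h.ne13, h.ne14]),
        Finset.card_insert_of_notMem (by simp [h.ne23, h.ne24]),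
        Finset.card_insert_of_notMem (by simp [h.ne34]), Finset.card_singleton]
    rw [← hcard]
    exact Finset.card_le_card hsub
  by_cases hdeg : ∃ v ∈ Sc G c, 3 ≤ (G.neighborFinset v).card
  · -- some vertex of the component has degree ≥ 3
    obtain ⟨b, hbS, hb3⟩ := hdeg
    obtain ⟨s, hs_sub, hs3⟩ := Finset.exists_subset_card_eq hb3
    obtain ⟨x, y, z, hxy, hxz, hyz, rfl⟩ := Finset.card_eq_three.mp hs3
    have hx : G.Adj b x := (G.mem_neighborFinset _ _).mp (hs_sub (by simp))
    have hy : G.Adj b y := (G.mem_neighborFinset _ _).mp (hs_sub (by simp))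
    have hz : G.Adj b z := (G.mem_neighborFinset _ _).mp (hs_sub (by simp))
    by_cases hb4 : 4 ≤ (G.neighborFinset b).card
    · -- degree ≥ 4: the component is a star, contradicting the path t0
      exfalso
      have hstar : ∀ w, G.Adj b w → ∀ w', G.Adj w w' → w' = b := by
        intro w hw w' hww'
        by_contra hne
        have hsd : 2 ≤ ((G.neighborFinset b) \ {w, w'}).card := by
          have h1 := Finset.card_le_card_sdiff_add_card (s := G.neighborFinset b)
            (t := {w, w'})
          have h2 := Finset.card_insert_le w ({w'} : Finset (Fin n))
          have h3 := Finset.card_singleton w'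
          omega
        obtain ⟨r1, hr1, r2, hr2, hr12⟩ := Finset.one_lt_card.mp
          (show 1 < ((G.neighborFinset b) \ {w, w'}).card by omega)
        rw [Finset.mem_sdiff] at hr1 hr2
        have hr1b : G.Adj b r1 := (G.mem_neighborFinset _ _).mp hr1.1
        have hr2b : G.Adj b r2 := (G.mem_neighborFinset _ _).mp hr2.1
        have hr1w : r1 ≠ w ∧ r1 ≠ w' := by
          have := hr1.2; simp only [Finset.mem_insert, Finset.mem_singleton] at this; tauto
        have hr2w : r2 ≠ w ∧ r2 ≠ w' := by
          have := hr2.2; simp only [Finset.mem_insert, Finset.mem_singleton] at this; tauto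
        have t1 : IsPT G (r1, b, w, w') :=
          ⟨hr1b.symm, hw, hww', hr1w.1, hr1w.2, fun hc => hne hc.symm⟩
        have t2 : IsPT G (r2, b, w, w') :=
          ⟨hr2b.symm, hw, hww', hr2w.1, hr2w.2, fun hc => hne hc.symm⟩
        have hc1 := colEq hp hnr t1
        have hc2 := colEq hp hnr t2
        have dne : s(r1, b) ≠ s(r2, b) := by
          rw [Ne, Sym2.eq_iff]
          push_neg
          exact ⟨fun hc => absurd hc hr12, fun hc => absurd hc.symm hr1b.ne⟩
        exact hp _ ((SimpleGraph.mem_edgeSet _).mpr hr1b.symm) _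
          ((SimpleGraph.mem_edgeSet _).mpr hr2b.symm) dne ⟨b, by simp, by simp⟩
          (hc1.trans hc2.symm)
      obtain ⟨a0, b0, c0, d0⟩ := t0
      have h0 := (mem_Tc.mp ht0).1
      have hb0S : G.connectedComponentMk b0 = c := mem_Sc.mp (coord_mem_Sc _ ht0).2.1
      have hbc : G.connectedComponentMk b = c := mem_Sc.mp hbS
      have hreach : G.Reachable b b0 :=
        SimpleGraph.ConnectedComponent.exact (hbc.trans hb0S.symm)
      have hcl : ∀ p ∈ {v : Fin n | v = b ∨ G.Adj b v}, ∀ w, G.Adj p w →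
          w ∈ {v : Fin n | v = b ∨ G.Adj b v} := by
        rintro p (rfl | hpb) w hw
        · exact Or.inr hw
        · exact Or.inl (hstar p hpb w hw)
      have hb0K : b0 = b ∨ G.Adj b b0 := reach_closed hcl (Or.inl rfl) hreach
      rcases hb0K with rfl | hadj
      · have hc0 : G.Adj b0 c0 := h0.2.1
        have := hstar c0 hc0 d0 h0.2.2.1
        exact h0.ne24 this.symm
      · have ha0 := hstar b0 hadj a0 h0.1.symm
        have hc0 := hstar b0 hadj c0 h0.2.1
        exact h0.ne13 (ha0.trans hc0.symm)
    · -- degree exactly 3: component is contained in {b,x,y,z}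
      have hNb : G.neighborFinset b = {x, y, z} :=
        (Finset.eq_of_subset_of_card_le hs_sub (by omega)).symm
      set K : Set (Fin n) := {v | v = b ∨ v = x ∨ v = y ∨ v = z} with hK
      have hcl : ∀ p ∈ K, ∀ w, G.Adj p w → w ∈ K := by
        rintro p (rfl | rfl | rfl | rfl) w hw
        · have : w ∈ G.neighborFinset p := (G.mem_neighborFinset _ _).mpr hw
          rw [hNb] at this
          simp only [Finset.mem_insert, Finset.mem_singleton] at this
          rcases this with rfl | rfl | rfl
          · exact Or.inr (Or.inl rfl)
          · exact Or.inr (Or.inr (Or.inl rfl))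
          · exact Or.inr (Or.inr (Or.inr rfl))
        · rcases nbr_closed hp hnr hx hy hz hxy hxz hyz hw with rfl | rfl | rfl
          · exact Or.inl rfl
          · exact Or.inr (Or.inr (Or.inl rfl))
          · exact Or.inr (Or.inr (Or.inr rfl))
        · rcases nbr_closed hp hnr hy hx hz hxy.symm hyz hxz hw with rfl | rfl | rfl
          · exact Or.inl rfl
          · exact Or.inr (Or.inl rfl)
          · exact Or.inr (Or.inr (Or.inr rfl))
        · rcases nbr_closed hp hnr hz hx hy hxz.symm hyz.symm hxy hw with rfl | rfl | rfl
          · exact Or.inl rfl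
          · exact Or.inr (Or.inl rfl)
          · exact Or.inr (Or.inr (Or.inl rfl))
      have hbc : G.connectedComponentMk b = c := mem_Sc.mp hbS
      have hSsub : Sc G c ⊆ ({b, x, y, z} : Finset (Fin n)) := by
        intro v hv
        have hreach : G.Reachable b v :=
          SimpleGraph.ConnectedComponent.exact (hbc.trans (mem_Sc.mp hv).symm)
        have hvK : v ∈ K := reach_closed hcl (Or.inl rfl) hreach
        simp only [hK, Set.mem_setOf_eq] at hvK
        simp only [Finset.mem_insert, Finset.mem_singleton]
        exact hvK
      have hkle : (Sc G c).card ≤ 4 := by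
        refine le_trans (Finset.card_le_card hSsub) ?_
        have c1 := Finset.card_insert_le b ({x, y, z} : Finset (Fin n))
        have c2 := Finset.card_insert_le x ({y, z} : Finset (Fin n))
        have c3 := Finset.card_insert_le y ({z} : Finset (Fin n))
        have c4 := Finset.card_singleton (α := Fin n) z
        omega
      have hcard4 : (Sc G c).card = 4 := le_antisymm hkle hk4
      have hTle : (Tc G c).card ≤ 24 := by
        rw [← Fintype.card_coe (Tc G c)]
        have hemb : Fintype.card (Fin 4 ↪ ↥(Sc G c)) = 24 := by
          rw [Fintype.card_embedding_eq, Fintype.card_fin, Fintype.card_coe, hcard4]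
          rfl
        rw [← hemb]
        have hF : ∀ t : ↥(Tc G c), Function.Injective
            (![⟨t.1.1, (coord_mem_Sc _ t.2).1⟩, ⟨t.1.2.1, (coord_mem_Sc _ t.2).2.1⟩,
               ⟨t.1.2.2.1, (coord_mem_Sc _ t.2).2.2.1⟩,
               ⟨t.1.2.2.2, (coord_mem_Sc _ t.2).2.2.2⟩] : Fin 4 → ↥(Sc G c)) := by
          intro t i j hij
          have h := (mem_Tc.mp t.2).1
          have n12 := h.ne12; have n23 := h.ne23; have n34 := h.ne34
          have n13 := h.ne13; have n14 := h.ne14; have n24 := h.ne24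
          fin_cases i <;> fin_cases j <;>
            first
              | rfl
              | (exfalso; revert hij;
                 simp [Subtype.ext_iff, n12, n23, n34, n13, n14, n24,
                   n12.symm, n23.symm, n34.symm, n13.symm, n14.symm, n24.symm])
        apply Fintype.card_le_of_injective (fun t => ⟨_, hF t⟩)
        intro t t' heq
        have e0 := congrArg (fun g : Fin 4 ↪ ↥(Sc G c) => ((g 0 : ↥(Sc G c)) : Fin n)) heq
        have e1 := congrArg (fun g : Fin 4 ↪ ↥(Sc G c) => ((g 1 : ↥(Sc G c)) : Fin n)) heq
        have e2 := congrArg (fun g : Fin 4 ↪ ↥(Sc G c) => ((g 2 : ↥(Sc G c)) : Fin n)) heq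
        have e3 := congrArg (fun g : Fin 4 ↪ ↥(Sc G c) => ((g 3 : ↥(Sc G c)) : Fin n)) heq
        simp only [Function.Embedding.coeFn_mk, Matrix.cons_val_zero, Matrix.cons_val_one,
          Matrix.head_cons, Matrix.cons_val_two, Matrix.tail_cons, Matrix.cons_val_three] at e0 e1 e2 e3
        exact Subtype.ext (Prod.ext e0 (Prod.ext e1 (Prod.ext e2 e3)))
      omega
  · -- all degrees ≤ 2
    push_neg at hdeg
    set pairs : Finset (Fin n × Fin n) :=
      (Sc G c).biUnion (fun a => (G.neighborFinset a).image (fun w => (a, w))) with hpairs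
    have hmapsTo : ∀ t ∈ Tc G c, (t.1, t.2.1) ∈ pairs := by
      intro t ht
      have h := (mem_Tc.mp ht).1
      rw [hpairs, Finset.mem_biUnion]
      exact ⟨t.1, (coord_mem_Sc _ ht).1, Finset.mem_image.mpr
        ⟨t.2.1, (G.mem_neighborFinset _ _).mpr h.1, rfl⟩⟩
    have hinj : Set.InjOn (fun t : Fin n × Fin n × Fin n × Fin n => (t.1, t.2.1))
        ↑(Tc G c) := by
      rintro ⟨a, b, c1, d1⟩ ht ⟨a', b', c2, d2⟩ ht' heq
      simp only [Finset.mem_coe] at ht ht'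
      obtain ⟨rfl, rfl⟩ : a = a' ∧ b = b' := by
        have e1 := congrArg Prod.fst heq
        have e2 := congrArg Prod.snd heq
        exact ⟨e1, e2⟩
      have h := (mem_Tc.mp ht).1
      have h' := (mem_Tc.mp ht').1
      have hbS : b ∈ Sc G c := (coord_mem_Sc _ ht).2.1
      have hcc : c1 = c2 := by
        by_contra hne
        have hsub : ({a, c1, c2} : Finset (Fin n)) ⊆ G.neighborFinset b := by
          intro v hv
          simp only [Finset.mem_insert, Finset.mem_singleton] at hv
          rcases hv with rfl | rfl | rfl
          · exact (G.mem_neighborFinset _ _).mpr h.1.symm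
          · exact (G.mem_neighborFinset _ _).mpr h.2.1
          · exact (G.mem_neighborFinset _ _).mpr h'.2.1
        have hcard : ({a, c1, c2} : Finset (Fin n)).card = 3 := by
          rw [Finset.card_insert_of_notMem (by simp [h.ne13, h'.ne13]),
            Finset.card_insert_of_notMem (by simp [hne]), Finset.card_singleton]
        have := Finset.card_le_card hsub
        have := hdeg b hbS
        omega
      subst hcc
      have hc1S : c1 ∈ Sc G c := (coord_mem_Sc _ ht).2.2.1
      have hdd : d1 = d2 := by
        by_contra hne
        have hsub : ({b, d1, d2} : Finset (Fin n)) ⊆ G.neighborFinset c1 := by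
          intro v hv
          simp only [Finset.mem_insert, Finset.mem_singleton] at hv
          rcases hv with rfl | rfl | rfl
          · exact (G.mem_neighborFinset _ _).mpr h.2.1.symm
          · exact (G.mem_neighborFinset _ _).mpr h.2.2.1
          · exact (G.mem_neighborFinset _ _).mpr h'.2.2.1
        have hcard : ({b, d1, d2} : Finset (Fin n)).card = 3 := by
          rw [Finset.card_insert_of_notMem (by simp [h.ne24, h'.ne24]),
            Finset.card_insert_of_notMem (by simp [hne]), Finset.card_singleton]
        have := Finset.card_le_card hsub
        have := hdeg c1 hc1S
        omega
      subst hdd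
      rfl
    have hTle : (Tc G c).card ≤ pairs.card :=
      Finset.card_le_card_of_injOn _ hmapsTo hinj
    have hple : pairs.card ≤ 2 * (Sc G c).card := by
      rw [hpairs, Finset.card_biUnion]
      · calc ∑ a ∈ Sc G c, ((G.neighborFinset a).image (fun w => (a, w))).card
            ≤ ∑ a ∈ Sc G c, 2 := by
              apply Finset.sum_le_sum
              intro a ha
              calc ((G.neighborFinset a).image (fun w => (a, w))).card
                  ≤ (G.neighborFinset a).card := Finset.card_image_le
                _ ≤ 2 := by have := hdeg a ha; omega
          _ = 2 * (Sc G c).card := by rw [Finset.sum_const, smul_eq_mul, mul_comm]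
      · intro u hu v hv huv
        rw [Function.onFun, Finset.disjoint_left]
        intro p hpu hpv
        rw [Finset.mem_image] at hpu hpv
        obtain ⟨w1, -, rfl⟩ := hpu
        obtain ⟨w2, -, he⟩ := hpv
        exact huv (congrArg Prod.fst he).symm
    omega


lemma sum_div4 {ι : Type*} (s : Finset ι) (f : ι → ℕ) :
    (∑ i ∈ s, f i / 4) ≤ (∑ i ∈ s, f i) / 4 := by
  classical
  induction s using Finset.induction with
  | empty => simp
  | insert _ _ h ih => rw [Finset.sum_insert h, Finset.sum_insert h]; omega

lemma pT_card_le (hp : IsProperEdgeColoring G col)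
    (hnr : ¬ HasRainbowCopy G col (pathGraph 4)) :
    (pT G).card ≤ 24 * (n / 4) := by
  classical
  haveI : Fintype G.ConnectedComponent := Fintype.ofFinite _
  have h1 : (pT G).card = ∑ c : G.ConnectedComponent, (Tc G c).card := by
    rw [Finset.card_eq_sum_card_fiberwise
      (f := fun t : Fin n × Fin n × Fin n × Fin n => G.connectedComponentMk t.1)
      (t := Finset.univ) (fun t _ => Finset.mem_univ _)]
    exact Finset.sum_congr rfl fun c _ => by rw [Tc]
  have h2 : ∑ c : G.ConnectedComponent, (Sc G c).card = n := by
    have hh := Finset.card_eq_sum_card_fiberwise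
      (f := fun v : Fin n => G.connectedComponentMk v)
      (s := Finset.univ) (t := Finset.univ) (fun v _ => Finset.mem_univ _)
    rw [Finset.card_univ, Fintype.card_fin] at hh
    conv_rhs => rw [hh]
    exact Finset.sum_congr rfl fun c _ => by rw [Sc]
  calc (pT G).card = ∑ c : G.ConnectedComponent, (Tc G c).card := h1
    _ ≤ ∑ c : G.ConnectedComponent, 24 * ((Sc G c).card / 4) :=
        Finset.sum_le_sum fun c _ => comp_bound hp hnr c
    _ = 24 * ∑ c : G.ConnectedComponent, ((Sc G c).card / 4) := by rw [Finset.mul_sum]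
    _ ≤ 24 * ((∑ c : G.ConnectedComponent, (Sc G c).card) / 4) :=
        Nat.mul_le_mul_left _ (sum_div4 _ _)
    _ = 24 * (n / 4) := by rw [h2]

end Upper

end P4A

/-- ex(n, P₄, rainbow-P₄) = 12⌊n/4⌋. -/
theorem p4_exact (n : ℕ) (hn : 0 < n) :
    IsGreatest {m : ℕ | ∃ (G : SimpleGraph (Fin n)) (col : Sym2 (Fin n) → ℕ),
        IsProperEdgeColoring G col ∧ ¬ HasRainbowCopy G col (pathGraph 4) ∧
        _root_.copyCount G (pathGraph 4) = m}
      (12 * (n / 4)) := by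
  constructor
  · exact ⟨P4A.G0 n, P4A.col0 n, P4A.proper0 n, P4A.norainbow0 n, P4A.copyCount_G0 n⟩
  · rintro m ⟨G, col, hp, hnr, rfl⟩
    have h1 := P4A.two_mul_copyCount G
    have h2 := P4A.pT_card_le hp hnr
    omega
end

section
/- For every integer k ≥ 2 there exist a constant c > 0 and an integer n₀ such that for all n ≥ n₀ there is a simple graph G on n vertices together with a proper edge-coloring of G containing no rainbow copy of the cycle C_{2k+1}, such that G contains at least c·n^{2k−1} copies of C_{2k+1}. (Lower bound of Theorem 1.2 for odd cycles: ex(n, C_{2k+1}, rainbow-C_{2k+1}) = Ω(n^{2k−1}).) -/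
open SimpleGraph

namespace OddRainbowAux

open scoped Classical

variable {n : ℕ}

/-- class (as a natural number) of a vertex -/
def clsN (m : ℕ) (v : Fin n) : ℕ := v.val / m
/-- index within its class -/
def idx (m : ℕ) (v : Fin n) : ℕ := v.val % m
/-- class as an element of `ZMod (2k+1)` -/
def clsZ (k m : ℕ) (v : Fin n) : ZMod (2*k+1) := (clsN m v : ZMod (2*k+1))

/-- the pair of classes spanned by one of the two special (matching) layers -/
def matching (k : ℕ) (a b : ZMod (2*k+1)) : Prop :=
  (a = 0 ∧ b = 1) ∨ (a = 1 ∧ b = 0) ∨ (a = 2 ∧ b = 3) ∨ (a = 3 ∧ b = 2)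

/-- adjacency relation of the construction -/
def R (k m : ℕ) (u v : Fin n) : Prop :=
  u ≠ v ∧ u.val < (2*k+1)*m ∧ v.val < (2*k+1)*m ∧
  (clsZ k m v = clsZ k m u + 1 ∨ clsZ k m u = clsZ k m v + 1) ∧
  (matching k (clsZ k m u) (clsZ k m v) → idx m u = idx m v)

lemma matching_symm {k : ℕ} {a b : ZMod (2*k+1)} (h : matching k a b) : matching k b a := by
  unfold matching at *; tauto

lemma R_symm {k m : ℕ} {u v : Fin n} (h : R k m u v) : R k m v u := by
  obtain ⟨h1, h2, h3, h4, h5⟩ := h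
  exact ⟨h1.symm, h3, h2, h4.symm, fun h => (h5 (matching_symm h)).symm⟩

/-- The construction: a blown-up cycle with two matching layers. -/
def Gr (k m n : ℕ) : SimpleGraph (Fin n) where
  Adj := R k m
  symm := ⟨fun _ _ => R_symm⟩
  loopless := ⟨fun v h => h.1 rfl⟩

lemma Gr_adj {k m n : ℕ} {u v : Fin n} : (Gr k m n).Adj u v ↔ R k m u v := Iff.rfl

/-- layer of an edge -/
noncomputable def layer (k m : ℕ) (u v : Fin n) : ℕ :=
  if clsZ k m v = clsZ k m u + 1 ∧ ¬ (clsZ k m u = clsZ k m v + 1) then (clsZ k m u).val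
  else if clsZ k m u = clsZ k m v + 1 ∧ ¬ (clsZ k m v = clsZ k m u + 1) then (clsZ k m v).val
  else 0

/-- the coloring, as a function of the two endpoints -/
noncomputable def fcol (k m : ℕ) (u v : Fin n) : ℕ :=
  if matching k (clsZ k m u) (clsZ k m v) then 0
  else layer k m u v * m + (idx m u + idx m v) % m + 1

lemma layer_comm (k m : ℕ) (u v : Fin n) : layer k m u v = layer k m v u := by
  unfold layer
  split_ifs <;> first | rfl | tauto

lemma fcol_comm (k m : ℕ) (u v : Fin n) : fcol k m u v = fcol k m v u := by
  unfold fcol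
  by_cases h : matching k (clsZ k m u) (clsZ k m v)
  · simp [h, matching_symm h]
  · have h' : ¬ matching k (clsZ k m v) (clsZ k m u) := fun hh => h (matching_symm hh)
    simp [h, h', layer_comm, Nat.add_comm (idx m u) (idx m v)]

/-- the coloring as a function on `Sym2` -/
noncomputable def col (k m : ℕ) : Sym2 (Fin n) → ℕ :=
  Sym2.lift ⟨fcol k m, fcol_comm k m⟩

lemma col_mk (k m : ℕ) (u v : Fin n) : col k m s(u, v) = fcol k m u v := rfl

section Basic

variable {k m : ℕ}

lemma cast_inj_of_lt {q : ℕ} [NeZero q] {a b : ℕ} (ha : a < q) (hb : b < q)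
    (h : (a : ZMod q) = b) : a = b := by
  have h1 := ZMod.val_cast_of_lt ha
  have h2 := ZMod.val_cast_of_lt hb
  rw [h] at h1; omega

lemma natCast_ne {q : ℕ} [NeZero q] {a b : ℕ} (ha : a < q) (hb : b < q) (h : a ≠ b) :
    (a : ZMod q) ≠ (b : ZMod q) := fun hc => h (cast_inj_of_lt ha hb hc)

lemma one_ne_zero' (hk : 2 ≤ k) : (1 : ZMod (2*k+1)) ≠ 0 := by
  have := natCast_ne (q := 2*k+1) (a := 1) (b := 0) (by omega) (by omega) (by omega)
  simpa using this

lemma two_ne_zero' (hk : 2 ≤ k) : (2 : ZMod (2*k+1)) ≠ 0 := by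
  have := natCast_ne (q := 2*k+1) (a := 2) (b := 0) (by omega) (by omega) (by omega)
  simpa using this

lemma zmodne (hk : 2 ≤ k) (a b : ℕ) (ha : a < 4) (hb : b < 4) (hab : a ≠ b) :
    (a : ZMod (2*k+1)) ≠ (b : ZMod (2*k+1)) :=
  natCast_ne (by omega) (by omega) hab

lemma matching_right_unique (hk : 2 ≤ k) {a b c : ZMod (2*k+1)}
    (h1 : matching k a b) (h2 : matching k a c) : b = c := by
  have e01 := zmodne hk 0 1 (by omega) (by omega) (by omega)
  have e02 := zmodne hk 0 2 (by omega) (by omega) (by omega)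
  have e03 := zmodne hk 0 3 (by omega) (by omega) (by omega)
  have e12 := zmodne hk 1 2 (by omega) (by omega) (by omega)
  have e13 := zmodne hk 1 3 (by omega) (by omega) (by omega)
  have e23 := zmodne hk 2 3 (by omega) (by omega) (by omega)
  push_cast at e01 e02 e03 e12 e13 e23
  unfold matching at h1 h2
  rcases h1 with (⟨ha,hb⟩|⟨ha,hb⟩|⟨ha,hb⟩|⟨ha,hb⟩) <;>
    rcases h2 with (⟨ha',hc⟩|⟨ha',hc⟩|⟨ha',hc⟩|⟨ha',hc⟩) <;> subst_vars <;>
    first | rfl | simp_all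

lemma m_pos_of_active {v : Fin n} (h : v.val < (2*k+1)*m) : 0 < m := by
  rcases Nat.eq_zero_or_pos m with h0 | h0
  · rw [h0, Nat.mul_zero] at h; omega
  · exact h0

lemma clsN_lt {v : Fin n} (h : v.val < (2*k+1)*m) : clsN m v < 2*k+1 :=
  (Nat.div_lt_iff_lt_mul (m_pos_of_active h)).2 (by rw [Nat.mul_comm] at h ⊢; exact h)

lemma idx_lt {v : Fin n} (h : v.val < (2*k+1)*m) : idx m v < m :=
  Nat.mod_lt _ (m_pos_of_active h)

lemma clsN_eq_of_clsZ_eq {u v : Fin n} (hu : u.val < (2*k+1)*m) (hv : v.val < (2*k+1)*m)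
    (h : clsZ k m u = clsZ k m v) : clsN m u = clsN m v :=
  cast_inj_of_lt (clsN_lt hu) (clsN_lt hv) h

lemma vert_eq {u v : Fin n} (hu : u.val < (2*k+1)*m) (hv : v.val < (2*k+1)*m)
    (hc : clsZ k m u = clsZ k m v) (hi : idx m u = idx m v) : u = v := by
  have hcc := clsN_eq_of_clsZ_eq hu hv hc
  have h1 := Nat.div_add_mod u.val m
  have h2 := Nat.div_add_mod v.val m
  unfold clsN at hcc
  unfold idx at hi
  rw [hcc] at h1
  exact Fin.ext (by omega)

end Basic

section Proper

variable {k m : ℕ}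

lemma not_both (hk : 2 ≤ k) {a b : ZMod (2*k+1)} (h : b = a + 1) : ¬ (a = b + 1) := by
  intro h2
  have h3 : a = a + 2 := by linear_combination h2 + h
  exact two_ne_zero' hk (left_eq_add.mp h3)

lemma layer_eq_left (hk : 2 ≤ k) {u v : Fin n} (h : clsZ k m v = clsZ k m u + 1) :
    layer k m u v = (clsZ k m u).val := by
  unfold layer; rw [if_pos ⟨h, not_both hk h⟩]

lemma layer_eq_right (hk : 2 ≤ k) {u v : Fin n} (h : clsZ k m u = clsZ k m v + 1) :
    layer k m u v = (clsZ k m v).val := by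
  rw [layer_comm]; exact layer_eq_left hk h

lemma layer_sep {l1 l2 s1 s2 M : ℕ} (h : l1 ≠ l2) (h1 : s1 < M) (h2 : s2 < M) :
    l1*M+s1 ≠ l2*M+s2 := by
  intro heq
  rcases lt_trichotomy l1 l2 with hlt | hEq | hlt
  · have h3 : (l1+1)*M ≤ l2*M := Nat.mul_le_mul_right _ (by omega)
    rw [Nat.add_mul] at h3; omega
  · exact h hEq
  · have h3 : (l2+1)*M ≤ l1*M := Nat.mul_le_mul_right _ (by omega)
    rw [Nat.add_mul] at h3; omega

lemma mod_ne {a b x M : ℕ} (ha : a < M) (hb : b < M) (hab : a ≠ b) :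
    (x + a) % M ≠ (x + b) % M := by
  intro h
  have h2 : a ≡ b [MOD M] := (Nat.ModEq.add_left_cancel' x h)
  rw [Nat.ModEq, Nat.mod_eq_of_lt ha, Nat.mod_eq_of_lt hb] at h2
  exact hab h2

lemma fcol_ne (hk : 2 ≤ k) {x b c : Fin n} (hb : R k m x b) (hc : R k m x c) (hbc : b ≠ c) :
    fcol k m x b ≠ fcol k m x c := by
  obtain ⟨-, hxa, hba, hb4, hb5⟩ := hb
  obtain ⟨-, -, hca, hc4, hc5⟩ := hc
  have hmpos : 0 < m := m_pos_of_active hxa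
  have hsb : (idx m x + idx m b) % m < m := Nat.mod_lt _ hmpos
  have hsc : (idx m x + idx m c) % m < m := Nat.mod_lt _ hmpos
  by_cases hMb : matching k (clsZ k m x) (clsZ k m b) <;>
    by_cases hMc : matching k (clsZ k m x) (clsZ k m c)
  · -- both matching: then b = c, contradiction
    exfalso
    have hcb : clsZ k m b = clsZ k m c := matching_right_unique hk hMb hMc
    have hib : idx m x = idx m b := hb5 hMb
    have hic : idx m x = idx m c := hc5 hMc
    exact hbc (vert_eq hba hca hcb (hib ▸ hic))
  · simp only [fcol, if_pos hMb, if_neg hMc]; omega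
  · simp only [fcol, if_pos hMc, if_neg hMb]; omega
  · simp only [fcol, if_neg hMb, if_neg hMc]
    by_cases hcb : clsZ k m b = clsZ k m c
    · -- same layer, different indices
      have hL : layer k m x b = layer k m x c := by unfold layer; rw [hcb]
      have hib : idx m b ≠ idx m c := by
        intro h; exact hbc (vert_eq hba hca hcb h)
      have hmod : (idx m x + idx m b) % m ≠ (idx m x + idx m c) % m :=
        mod_ne (idx_lt hba) (idx_lt hca) hib
      rw [hL]
      omega
    · -- different layers
      have hLne : layer k m x b ≠ layer k m x c := by
        rcases hb4 with h1 | h1 <;> rcases hc4 with h2 | h2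
        · exact absurd (h1.trans h2.symm) hcb
        · rw [layer_eq_left hk h1, layer_eq_right hk h2]
          intro h
          have heq := ZMod.val_injective _ h
          have h10 : (1 : ZMod (2*k+1)) = 0 := by linear_combination heq - h2
          exact one_ne_zero' hk h10
        · rw [layer_eq_right hk h1, layer_eq_left hk h2]
          intro h
          have heq := ZMod.val_injective _ h
          have h10 : (1 : ZMod (2*k+1)) = 0 := by linear_combination - heq - h1
          exact one_ne_zero' hk h10
        · exact absurd (add_right_cancel (h1.symm.trans h2)) hcb
      have := layer_sep hLne hsb hsc
      omega

lemma proper (hk : 2 ≤ k) (m : ℕ) : IsProperEdgeColoring (Gr k m n) (col k m) := by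
  intro e1 he1 e2 he2 hne hshare
  obtain ⟨x, hx1, hx2⟩ := hshare
  obtain ⟨b, rfl⟩ := Sym2.mem_iff_exists.mp hx1
  obtain ⟨c, rfl⟩ := Sym2.mem_iff_exists.mp hx2
  rw [SimpleGraph.mem_edgeSet] at he1 he2
  have hbc : b ≠ c := fun h => hne (by rw [h])
  rw [col_mk, col_mk]
  exact fcol_ne hk he1 he2 hbc

end Proper

section NoRainbow

variable {k m : ℕ}

lemma dichotomy (hk : 2 ≤ k) (g : Fin (2*k+1) → ZMod (2*k+1))
    (hstep : ∀ i, g (i+1) = g i + 1 ∨ g i = g (i+1) + 1) :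
    (∀ i, g (i+1) = g i + 1) ∨ (∀ i, g i = g (i+1) + 1) := by
  classical
  set S := Finset.univ.filter (fun i : Fin (2*k+1) => g (i+1) = g i + 1) with hS
  set T := Finset.univ.filter (fun i : Fin (2*k+1) => ¬ (g (i+1) = g i + 1)) with hT
  have hsum0 : ∑ i : Fin (2*k+1), (g (i+1) - g i) = 0 := by
    rw [Finset.sum_sub_distrib]
    have he : ∑ i : Fin (2*k+1), g (i+1) = ∑ i : Fin (2*k+1), g i := by
      apply Fintype.sum_equiv (Equiv.addRight (1 : Fin (2*k+1)))
      intro i; rfl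
    rw [he, sub_self]
  have hsplit : ∑ i : Fin (2*k+1), (g (i+1) - g i)
      = S.card • (1 : ZMod (2*k+1)) + T.card • (-1 : ZMod (2*k+1)) := by
    rw [← Finset.sum_filter_add_sum_filter_not Finset.univ
      (fun i : Fin (2*k+1) => g (i+1) = g i + 1) (fun i => g (i+1) - g i)]
    congr 1
    · apply Finset.sum_eq_card_nsmul
      intro i hi
      rw [Finset.mem_filter] at hi
      rw [hi.2]; ring
    · apply Finset.sum_eq_card_nsmul
      intro i hi
      rw [Finset.mem_filter] at hi
      rcases hstep i with h | h
      · exact absurd h hi.2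
      · rw [h]; ring
  have hcard : S.card + T.card = 2*k+1 := by
    rw [hS, hT]
    rw [Finset.card_filter_add_card_filter_not]
    simp
  have hab : (S.card : ZMod (2*k+1)) = (T.card : ZMod (2*k+1)) := by
    rw [hsum0] at hsplit
    have h1 : (S.card : ZMod (2*k+1)) - (T.card : ZMod (2*k+1)) = 0 := by
      rw [nsmul_eq_mul, nsmul_eq_mul, mul_one] at hsplit
      linear_combination - hsplit
    linear_combination h1
  have habq : (S.card : ZMod (2*k+1)) + (T.card : ZMod (2*k+1)) = 0 := by
    rw [← Nat.cast_add, hcard, ZMod.natCast_self]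
  have h2a : ((2*S.card : ℕ) : ZMod (2*k+1)) = 0 := by
    push_cast
    linear_combination hab + habq
  have hdvd : (2*k+1) ∣ 2*S.card := (ZMod.natCast_eq_zero_iff _ _).1 h2a
  have hcop : Nat.Coprime (2*k+1) 2 := by
    exact Nat.coprime_two_right.mpr ⟨k, rfl⟩
  have hdvd' : (2*k+1) ∣ S.card * 2 := by rw [Nat.mul_comm S.card 2]; exact hdvd
  have hdvda : (2*k+1) ∣ S.card := hcop.dvd_of_dvd_mul_right hdvd' 
  have hSle : S.card ≤ 2*k+1 := le_trans (Finset.card_filter_le _ _) (by simp)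
  rcases Nat.eq_zero_or_pos S.card with h0 | hpos
  · right
    intro i
    have hiT : ¬ (g (i+1) = g i + 1) := by
      intro h
      have : i ∈ S := by rw [hS, Finset.mem_filter]; exact ⟨Finset.mem_univ _, h⟩
      rw [Finset.card_eq_zero] at h0
      rw [h0] at this
      exact absurd this (Finset.notMem_empty _)
    rcases hstep i with h | h
    · exact absurd h hiT
    · exact h
  · left
    have hq : S.card = 2*k+1 := le_antisymm hSle (Nat.le_of_dvd hpos hdvda)
    have hSuniv : S = Finset.univ := Finset.eq_univ_of_card S (by rw [hq]; simp)
    intro i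
    have : i ∈ S := hSuniv ▸ Finset.mem_univ i
    rw [hS, Finset.mem_filter] at this
    exact this.2

open Fin.NatCast in
lemma walk_inc (hk : 2 ≤ k) (g : Fin (2*k+1) → ZMod (2*k+1))
    (h : ∀ i, g (i+1) = g i + 1) :
    ∀ j : ℕ, g ((j : ℕ) : Fin (2*k+1)) = g 0 + (j : ZMod (2*k+1)) := by
  intro j
  induction j with
  | zero => simp
  | succ j ih =>
    have hc : ((j+1 : ℕ) : Fin (2*k+1)) = ((j : ℕ) : Fin (2*k+1)) + 1 := by push_cast; ring
    rw [hc, h, ih]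
    push_cast
    ring

open Fin.NatCast in
lemma walk_dec (hk : 2 ≤ k) (g : Fin (2*k+1) → ZMod (2*k+1))
    (h : ∀ i, g i = g (i+1) + 1) :
    ∀ j : ℕ, g ((j : ℕ) : Fin (2*k+1)) = g 0 - (j : ZMod (2*k+1)) := by
  intro j
  induction j with
  | zero => simp
  | succ j ih =>
    have hc : ((j+1 : ℕ) : Fin (2*k+1)) = ((j : ℕ) : Fin (2*k+1)) + 1 := by push_cast; ring
    have hstep : g (((j : ℕ) : Fin (2*k+1)) + 1) = g ((j : ℕ) : Fin (2*k+1)) - 1 := by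
      rw [h ((j : ℕ) : Fin (2*k+1))]; ring
    rw [hc, hstep, ih]
    push_cast
    ring

open Fin.NatCast in
lemma exists_edge_classes (hk : 2 ≤ k) (g : Fin (2*k+1) → ZMod (2*k+1))
    (hstep : ∀ i, g (i+1) = g i + 1 ∨ g i = g (i+1) + 1) (c : ZMod (2*k+1)) :
    ∃ i, (g i = c ∧ g (i+1) = c + 1) ∨ (g (i+1) = c ∧ g i = c + 1) := by
  rcases dichotomy hk g hstep with hinc | hdec
  · refine ⟨(((c - g 0).val : ℕ) : Fin (2*k+1)), Or.inl ⟨?_, ?_⟩⟩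
    · rw [walk_inc hk g hinc, ZMod.natCast_rightInverse (c - g 0)]; ring
    · rw [hinc, walk_inc hk g hinc, ZMod.natCast_rightInverse (c - g 0)]; ring
  · refine ⟨(((g 0 - (c+1)).val : ℕ) : Fin (2*k+1)), Or.inr ⟨?_, ?_⟩⟩
    · have h1 : g (((g 0 - (c+1)).val : ℕ) : Fin (2*k+1)) = c + 1 := by
        rw [walk_dec hk g hdec, ZMod.natCast_rightInverse (g 0 - (c+1))]; ring
      have h2 := hdec (((g 0 - (c+1)).val : ℕ) : Fin (2*k+1))
      rw [h1] at h2
      linear_combination - h2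
    · rw [walk_dec hk g hdec, ZMod.natCast_rightInverse (g 0 - (c+1))]; ring

lemma no_rainbow (hk : 2 ≤ k) (m : ℕ) {n : ℕ} :
    ¬ HasRainbowCopy (Gr k m n) (col k m) (cycleGraph (2*k+1)) := by
  rintro ⟨A, ⟨φ⟩, hinj⟩
  haveI : NeZero (2*k+1) := ⟨by omega⟩
  -- the vertices of the cycle
  let v : Fin (2*k+1) → Fin n := fun i => ((φ.symm i : A.verts) : Fin n)
  have hAdj : ∀ i : Fin (2*k+1), A.Adj (v i) (v (i+1)) := by
    intro i
    have hcyc : (cycleGraph (2*k+1)).Adj i (i+1) := by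
      rw [cycleGraph_adj']
      right
      rw [add_sub_cancel_left]
      rw [Fin.val_one']
      exact Nat.mod_eq_of_lt (by omega)
    have hcoe : A.coe.Adj (φ.symm i) (φ.symm (i+1)) := φ.symm.map_rel_iff.mpr hcyc
    exact hcoe
  have hR : ∀ i, R k m (v i) (v (i+1)) := fun i => A.adj_sub (hAdj i)
  let g : Fin (2*k+1) → ZMod (2*k+1) := fun i => clsZ k m (v i)
  have hstep : ∀ i : Fin (2*k+1), g (i+1) = g i + 1 ∨ g i = g (i+1) + 1 :=
    fun i => (hR i).2.2.2.1
  obtain ⟨i, hi⟩ := exists_edge_classes hk g hstep 0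
  obtain ⟨j, hj⟩ := exists_edge_classes hk g hstep 2
  have he1 : s(v i, v (i+1)) ∈ A.edgeSet := by
    rw [Subgraph.mem_edgeSet]; exact hAdj i
  have he2 : s(v j, v (j+1)) ∈ A.edgeSet := by
    rw [Subgraph.mem_edgeSet]; exact hAdj j
  have hm1 : matching k (clsZ k m (v i)) (clsZ k m (v (i+1))) := by
    rcases hi with ⟨h1, h2⟩ | ⟨h1, h2⟩
    · exact Or.inl ⟨h1, h2.trans (zero_add 1)⟩
    · exact Or.inr (Or.inl ⟨h2.trans (zero_add 1), h1⟩)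
  have hm2 : matching k (clsZ k m (v j)) (clsZ k m (v (j+1))) := by
    have h23 : (2 : ZMod (2*k+1)) + 1 = 3 := by norm_num
    rcases hj with ⟨h1, h2⟩ | ⟨h1, h2⟩
    · exact Or.inr (Or.inr (Or.inl ⟨h1, h2.trans h23⟩))
    · exact Or.inr (Or.inr (Or.inr ⟨h2.trans h23, h1⟩))
  have hc1 : col k m s(v i, v (i+1)) = 0 := by
    rw [col_mk]; unfold fcol; rw [if_pos hm1]
  have hc2 : col k m s(v j, v (j+1)) = 0 := by
    rw [col_mk]; unfold fcol; rw [if_pos hm2]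
  have hgi : g i = 0 ∨ g i = 1 := by
    rcases hi with ⟨h1, h2⟩ | ⟨h1, h2⟩
    · exact Or.inl h1
    · exact Or.inr (h2.trans (zero_add 1))
  have hgi1 : g (i+1) = 0 ∨ g (i+1) = 1 := by
    rcases hi with ⟨h1, h2⟩ | ⟨h1, h2⟩
    · exact Or.inr (h2.trans (zero_add 1))
    · exact Or.inl h1
  have hgj : g j = 2 ∨ g j = 3 := by
    have h23 : (2 : ZMod (2*k+1)) + 1 = 3 := by norm_num
    rcases hj with ⟨h1, h2⟩ | ⟨h1, h2⟩
    · exact Or.inl h1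
    · exact Or.inr (h2.trans h23)
  have hgj1 : g (j+1) = 2 ∨ g (j+1) = 3 := by
    have h23 : (2 : ZMod (2*k+1)) + 1 = 3 := by norm_num
    rcases hj with ⟨h1, h2⟩ | ⟨h1, h2⟩
    · exact Or.inr (h2.trans h23)
    · exact Or.inl h1
  have hne : s(v i, v (i+1)) ≠ s(v j, v (j+1)) := by
    intro h
    have e02 := zmodne hk 0 2 (by norm_num) (by norm_num) (by norm_num)
    have e03 := zmodne hk 0 3 (by norm_num) (by norm_num) (by norm_num)
    have e12 := zmodne hk 1 2 (by norm_num) (by norm_num) (by norm_num)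
    have e13 := zmodne hk 1 3 (by norm_num) (by norm_num) (by norm_num)
    push_cast at e02 e03 e12 e13
    have hmem : v i ∈ s(v j, v (j+1)) := h ▸ Sym2.mem_mk_left _ _
    rw [Sym2.mem_iff] at hmem
    rcases hmem with hEq | hEq
    · have hcc : g i = g j := congrArg (clsZ k m) hEq
      rcases hgi with h0 | h0 <;> rcases hgj with h1 | h1 <;> rw [h0, h1] at hcc <;>
        simp_all
    · have hcc : g i = g (j+1) := congrArg (clsZ k m) hEq
      rcases hgi with h0 | h0 <;> rcases hgj1 with h1 | h1 <;> rw [h0, h1] at hcc <;>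
        simp_all
  exact hne (hinj he1 he2 (hc1.trans hc2.symm))

end NoRainbow

section Count

lemma finite_subgraph {V : Type*} [Finite V] (G : SimpleGraph V) : Finite G.Subgraph := by
  have hinj : Function.Injective (fun A : G.Subgraph => (A.verts, A.Adj)) := by
    intro A B h
    simp only [Prod.mk.injEq] at h
    exact Subgraph.ext h.1 h.2
  exact Finite.of_injective _ hinj

/-- which free coordinate a class uses -/
def Jmap (k : ℕ) (hk : 2 ≤ k) (c : Fin (2*k+1)) : Fin (2*k-1) :=
  ⟨if c.val ≤ 1 then 0 else if c.val ≤ 3 then 1 else c.val - 2, by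
    have := c.isLt; split_ifs <;> omega⟩

/-- the transversal cycle determined by free coordinates `t` -/
def Umap (k m n : ℕ) (hk : 2 ≤ k) (hn : (2*k+1)*m ≤ n) (t : Fin (2*k-1) → Fin m)
    (c : Fin (2*k+1)) : Fin n :=
  ⟨c.val * m + (t (Jmap k hk c)).val, by
    have h1 := (t (Jmap k hk c)).isLt
    have h2 : (c.val+1)*m ≤ (2*k+1)*m := Nat.mul_le_mul_right m c.isLt
    rw [Nat.add_mul] at h2
    omega⟩

variable {k m n : ℕ} (hk : 2 ≤ k) (hn : (2*k+1)*m ≤ n)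

lemma Umap_active (t : Fin (2*k-1) → Fin m) (c : Fin (2*k+1)) :
    (Umap k m n hk hn t c).val < (2*k+1)*m := by
  show c.val * m + (t (Jmap k hk c)).val < (2*k+1)*m
  have h1 := (t (Jmap k hk c)).isLt
  have h2 : (c.val+1)*m ≤ (2*k+1)*m := Nat.mul_le_mul_right m c.isLt
  rw [Nat.add_mul] at h2
  omega

lemma clsN_Umap (hm : 0 < m) (t : Fin (2*k-1) → Fin m) (c : Fin (2*k+1)) :
    clsN m (Umap k m n hk hn t c) = c.val := by
  show (c.val * m + (t (Jmap k hk c)).val) / m = c.val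
  rw [Nat.mul_comm c.val m, Nat.mul_add_div hm, Nat.div_eq_of_lt (t (Jmap k hk c)).isLt,
    Nat.add_zero]

lemma idx_Umap (hm : 0 < m) (t : Fin (2*k-1) → Fin m) (c : Fin (2*k+1)) :
    idx m (Umap k m n hk hn t c) = (t (Jmap k hk c)).val := by
  show (c.val * m + (t (Jmap k hk c)).val) % m = (t (Jmap k hk c)).val
  rw [Nat.mul_comm c.val m, Nat.mul_add_mod, Nat.mod_eq_of_lt (t (Jmap k hk c)).isLt]

lemma clsZ_Umap (hm : 0 < m) (t : Fin (2*k-1) → Fin m) (c : Fin (2*k+1)) :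
    clsZ k m (Umap k m n hk hn t c) = (c.val : ZMod (2*k+1)) := by
  unfold clsZ
  rw [clsN_Umap hk hn hm]

lemma Umap_inj (hm : 0 < m) (t : Fin (2*k-1) → Fin m) :
    Function.Injective (Umap k m n hk hn t) := by
  intro a b h
  have h2 : a.val = b.val := by
    rw [← clsN_Umap hk hn hm t a, ← clsN_Umap hk hn hm t b, h]
  exact Fin.ext h2

lemma val_succ_cast (hk : 2 ≤ k) (c : Fin (2*k+1)) :
    (((c+1 : Fin (2*k+1)).val : ℕ) : ZMod (2*k+1)) = (c.val : ZMod (2*k+1)) + 1 := by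
  have e1 : 1 % (2*k+1) = 1 := Nat.mod_eq_of_lt (by omega)
  rw [Fin.val_add, Fin.val_one', e1]
  rw [ZMod.natCast_mod]
  push_cast
  ring

lemma matching_succ_cases (hk2 : 2 ≤ k) {a : ZMod (2*k+1)} (h : matching k a (a+1)) :
    a = 0 ∨ a = 2 := by
  rcases h with ⟨h1, h2⟩ | ⟨h1, h2⟩ | ⟨h1, h2⟩ | ⟨h1, h2⟩
  · exact Or.inl h1
  · exact absurd (by linear_combination h2 - h1 : (2 : ZMod (2*k+1)) = 0) (two_ne_zero' hk2)
  · exact Or.inr h1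
  · exact absurd (by linear_combination h2 - h1 : (2 : ZMod (2*k+1)) = 0) (two_ne_zero' hk2)

lemma Umap_adj (hm : 0 < m) (t : Fin (2*k-1) → Fin m) (c : Fin (2*k+1)) :
    R k m (Umap k m n hk hn t c) (Umap k m n hk hn t (c+1)) := by
  haveI : NeZero (2*k+1) := ⟨by omega⟩
  have hcz := clsZ_Umap hk hn hm t c
  have hcz1 := clsZ_Umap hk hn hm t (c+1)
  have hsucc : clsZ k m (Umap k m n hk hn t (c+1)) = clsZ k m (Umap k m n hk hn t c) + 1 := by
    rw [hcz, hcz1, val_succ_cast hk]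
  refine ⟨?_, Umap_active hk hn t c, Umap_active hk hn t (c+1), Or.inl hsucc, ?_⟩
  · intro h
    have h2 : c = c + 1 := Umap_inj hk hn hm t h
    have h3 := left_eq_add.mp h2
    have h4 := congrArg Fin.val h3
    rw [Fin.val_one', Fin.val_zero] at h4
    rw [Nat.mod_eq_of_lt (by omega : 1 < 2*k+1)] at h4
    omega
  · intro hmat
    rw [hcz, hsucc, hcz] at hmat
    rw [idx_Umap hk hn hm, idx_Umap hk hn hm]
    have e1 : 1 % (2*k+1) = 1 := Nat.mod_eq_of_lt (by omega)
    rcases matching_succ_cases hk hmat with h0 | h2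
    · have hcval : c.val = 0 := by
        apply cast_inj_of_lt (q := 2*k+1) c.isLt (by omega)
        rw [h0]; push_cast; ring
      have hc1val : (c+1 : Fin (2*k+1)).val = 1 := by
        rw [Fin.val_add, Fin.val_one', e1, hcval]
        rw [Nat.zero_add]
        exact e1
      have hJ : Jmap k hk c = Jmap k hk (c+1) := by
        apply Fin.ext
        show (if c.val ≤ 1 then 0 else if c.val ≤ 3 then 1 else c.val - 2)
          = (if (c+1 : Fin (2*k+1)).val ≤ 1 then 0 else
              if (c+1 : Fin (2*k+1)).val ≤ 3 then 1 else (c+1 : Fin (2*k+1)).val - 2)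
        rw [hcval, hc1val]
        norm_num
      rw [hJ]
    · have hcval : c.val = 2 := by
        apply cast_inj_of_lt (q := 2*k+1) c.isLt (by omega)
        rw [h2]; push_cast; ring
      have hc1val : (c+1 : Fin (2*k+1)).val = 3 := by
        rw [Fin.val_add, Fin.val_one', e1, hcval]
        exact Nat.mod_eq_of_lt (by omega)
      have hJ : Jmap k hk c = Jmap k hk (c+1) := by
        apply Fin.ext
        show (if c.val ≤ 1 then 0 else if c.val ≤ 3 then 1 else c.val - 2)
          = (if (c+1 : Fin (2*k+1)).val ≤ 1 then 0 else
              if (c+1 : Fin (2*k+1)).val ≤ 3 then 1 else (c+1 : Fin (2*k+1)).val - 2)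
        rw [hcval, hc1val]
        norm_num
      rw [hJ]

/-- the transversal cycle as a graph homomorphism -/
def cycHom (hm : 0 < m) (t : Fin (2*k-1) → Fin m) :
    cycleGraph (2*k+1) →g Gr k m n where
  toFun := Umap k m n hk hn t
  map_rel' := by
    intro a b hab
    haveI : NeZero (2*k+1) := ⟨by omega⟩
    rw [cycleGraph_adj'] at hab
    have key : ∀ x y : Fin (2*k+1), (y - x).val = 1 →
        R k m (Umap k m n hk hn t x) (Umap k m n hk hn t y) := by
      intro x y hxy
      have h1 : y - x = 1 := by
        apply Fin.ext
        rw [hxy, Fin.val_one']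
        exact (Nat.mod_eq_of_lt (by omega)).symm
      have h2 := sub_eq_iff_eq_add.mp h1
      subst h2
      have h3 : (1 + x : Fin (2*k+1)) = x + 1 := add_comm 1 x
      rw [h3]
      exact Umap_adj hk hn hm t x
    rcases hab with h | h
    · exact R_symm (key b a h)
    · exact key a b h

/-- the transversal cycle as a subgraph -/
def cycSub (hm : 0 < m) (t : Fin (2*k-1) → Fin m) : (Gr k m n).Subgraph :=
  Subgraph.map (cycHom hk hn hm t) ⊤

lemma cycSub_verts (hm : 0 < m) (t : Fin (2*k-1) → Fin m) :
    (cycSub hk hn hm t).verts = Set.range (Umap k m n hk hn t) := by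
  show (Subgraph.map _ ⊤).verts = _
  rw [Subgraph.map_verts, Subgraph.verts_top, Set.image_univ]
  rfl

lemma cycSub_iso (hm : 0 < m) (t : Fin (2*k-1) → Fin m) :
    Nonempty ((cycSub hk hn hm t).coe ≃g cycleGraph (2*k+1)) := by
  haveI : NeZero (2*k+1) := ⟨by omega⟩
  have hinj := Umap_inj hk hn hm t
  let e : ((cycSub hk hn hm t).verts : Type) ≃ Fin (2*k+1) :=
    (Equiv.setCongr (cycSub_verts hk hn hm t)).trans (Equiv.ofInjective _ hinj).symm
  have hU : ∀ x : (cycSub hk hn hm t).verts, Umap k m n hk hn t (e x) = (x : Fin n) :=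
    fun x => Equiv.apply_ofInjective_symm hinj _
  refine ⟨⟨e, ?_⟩⟩
  intro x y
  constructor
  · intro h
    show (cycSub hk hn hm t).Adj x y
    show Relation.Map (⊤ : (cycleGraph (2*k+1)).Subgraph).Adj
        (Umap k m n hk hn t) (Umap k m n hk hn t) (x : Fin n) (y : Fin n)
    exact ⟨e x, e y, Subgraph.top_adj.mpr h, hU x, hU y⟩
  · intro h
    have h'' : Relation.Map (⊤ : (cycleGraph (2*k+1)).Subgraph).Adj
        (Umap k m n hk hn t) (Umap k m n hk hn t) (x : Fin n) (y : Fin n) := h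
    obtain ⟨a, b, hab, ha, hb⟩ := h''
    rw [Subgraph.top_adj] at hab
    have hax : a = e x := hinj (by rw [ha, hU x])
    have hby : b = e y := hinj (by rw [hb, hU y])
    rw [← hax, ← hby]
    exact hab

lemma cycSub_inj (hm : 0 < m) : Function.Injective (cycSub (n := n) hk hn hm) := by
  intro t t' h
  have hV : Set.range (Umap k m n hk hn t) = Set.range (Umap k m n hk hn t') := by
    rw [← cycSub_verts hk hn hm t, ← cycSub_verts hk hn hm t', h]
  have hcomp : ∀ c, Umap k m n hk hn t c = Umap k m n hk hn t' c := by
    intro c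
    have hmem : Umap k m n hk hn t c ∈ Set.range (Umap k m n hk hn t') := by
      rw [← hV]; exact Set.mem_range_self c
    obtain ⟨c', hc'⟩ := hmem
    have hcc : c' = c := by
      have h1 : c'.val = c.val := by
        rw [← clsN_Umap hk hn hm t' c', ← clsN_Umap hk hn hm t c, hc']
      exact Fin.ext h1
    rw [← hc', hcc]
  funext s
  have hs := s.isLt
  have hsv : 2*k - 1 = 2*k - 1 := rfl
  refine Fin.ext ?_
  let c : Fin (2*k+1) := ⟨if s.val = 0 then 0 else if s.val = 1 then 2 else s.val + 2,
    by split_ifs <;> omega⟩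
  have hcval : c.val = if s.val = 0 then 0 else if s.val = 1 then 2 else s.val + 2 := rfl
  have hJ : Jmap k hk c = s := by
    apply Fin.ext
    show (if c.val ≤ 1 then 0 else if c.val ≤ 3 then 1 else c.val - 2) = s.val
    rw [hcval]
    split_ifs <;> omega
  have hc := hcomp c
  have hvals : c.val * m + (t (Jmap k hk c)).val = c.val * m + (t' (Jmap k hk c)).val :=
    congrArg Fin.val hc
  have hts : (t (Jmap k hk c)).val = (t' (Jmap k hk c)).val := by omega
  rw [hJ] at hts
  exact hts

lemma count_lower (hk2 : 2 ≤ k) (hm : 0 < m) (hn2 : (2*k+1)*m ≤ n) :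
    m^(2*k-1) ≤ _root_.copyCount (Gr k m n) (cycleGraph (2*k+1)) := by
  classical
  haveI : Finite (Gr k m n).Subgraph := finite_subgraph _
  have hsub : Set.range (cycSub (n := n) hk2 hn2 hm) ⊆
      {A : (Gr k m n).Subgraph | Nonempty (A.coe ≃g cycleGraph (2*k+1))} := by
    rintro A ⟨t, rfl⟩
    exact cycSub_iso hk2 hn2 hm t
  have h1 := Set.ncard_le_ncard hsub (Set.toFinite _)
  have h2 : (Set.range (cycSub (n := n) hk2 hn2 hm)).ncard = m^(2*k-1) := by
    rw [← Set.image_univ, Set.ncard_image_of_injective _ (cycSub_inj hk2 hn2 hm),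
      Set.ncard_univ]
    rw [Nat.card_eq_fintype_card, Fintype.card_fun]
    simp
  unfold _root_.copyCount
  omega

end Count

end OddRainbowAux

/-- Lower bound of Theorem 1.2 for odd cycles:
ex(n, C_{2k+1}, rainbow-C_{2k+1}) = Ω(n^{2k-1}). -/
theorem odd_cycle_rainbow_lower (k : ℕ) (hk : 2 ≤ k) :
    ∃ c : ℝ, 0 < c ∧ ∃ n₀ : ℕ, ∀ n ≥ n₀,
      ∃ (G : SimpleGraph (Fin n)) (col : Sym2 (Fin n) → ℕ),
        IsProperEdgeColoring G col ∧ ¬ HasRainbowCopy G col (cycleGraph (2 * k + 1)) ∧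
        c * (n : ℝ) ^ (2 * k - 1) ≤ (_root_.copyCount G (cycleGraph (2 * k + 1)) : ℝ) := by
  classical
  refine ⟨(1/(2*(2*k+1) : ℝ))^(2*k-1), by positivity, 4*k+2, ?_⟩
  intro n hn
  set m := n / (2*k+1) with hm_def
  have hm : 0 < m := Nat.div_pos (by omega) (by omega)
  have hdm := Nat.div_add_mod n (2*k+1)
  rw [← hm_def] at hdm
  have hn2 : (2*k+1)*m ≤ n := by omega
  refine ⟨OddRainbowAux.Gr k m n, OddRainbowAux.col k m,
    OddRainbowAux.proper hk m, OddRainbowAux.no_rainbow hk m, ?_⟩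
  have hcount := OddRainbowAux.count_lower hk hm hn2
  have hd : (0:ℝ) < 2*(2*k+1) := by positivity
  have hmn : (n : ℝ) ≤ 2*(2*k+1) * m := by
    have h3 : n % (2*k+1) < 2*k+1 := Nat.mod_lt _ (by omega)
    have hdm2 := hdm
    have h4 : (2*k+1)*1 ≤ (2*k+1)*m := Nat.mul_le_mul_left _ hm
    have h5 : n ≤ 2*((2*k+1)*m) := by omega
    calc (n:ℝ) ≤ ((2*((2*k+1)*m) : ℕ) : ℝ) := Nat.cast_le.mpr h5
    _ = 2*(2*k+1)*m := by push_cast; ring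
  have step1 : (1/(2*(2*k+1) : ℝ))^(2*k-1) * (n:ℝ)^(2*k-1) ≤ (m:ℝ)^(2*k-1) := by
    rw [← mul_pow]
    apply pow_le_pow_left₀ (by positivity)
    rw [div_mul_eq_mul_div, one_mul, div_le_iff₀ hd]
    linarith [hmn]
  have step2 : (m:ℝ)^(2*k-1) ≤ (_root_.copyCount (OddRainbowAux.Gr k m n) (cycleGraph (2*k+1)) : ℝ) := by
    calc (m:ℝ)^(2*k-1) = ((m^(2*k-1) : ℕ) : ℝ) := by push_cast; ring
    _ ≤ _ := Nat.cast_le.mpr hcount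
  linarith
end
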